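/- arXiv:1909.07135 — 7 statements merged into one kernel-verified Lean document; each statement's English description precedes it below -/
import Mathlib

section
/- Let K be an infinite field of characteristic ≠ 2 and let {q_i}_{i∈I} be a nonsingular system of quadratic forms on a finite-dimensional K-vector space V. Then the K-span of {q_i | i ∈ I} inside the space of quadratic forms on V contains a unimodular (nondegenerate) quadratic form. -/
set_option synthInstance.maxHeartbeats 400000
set_option maxHeartbeats 1000000

open Module TensorProduct

/-- A system of quadratic (symmetric bilinear) forms is nonsingular if over some field
extension `L/K` the `L`-span of the base-changed forms contains a nondegenerate form. -/
def IsNonsingularSystem {K : Type u} {V : Type v} [Field K] [AddCommGroup V] [Module K V]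
    {ι : Type*} (B : ι → LinearMap.BilinForm K V) : Prop :=
  ∃ (L : Type (max u v)) (_ : Field L) (_ : Algebra K L),
    ∃ B' ∈ Submodule.span L
      (Set.range fun i => LinearMap.BilinForm.baseChange L (B i)),
      LinearMap.BilinForm.Nondegenerate B'

/-- The Gram matrix of a base-changed bilinear form w.r.t. the base-changed basis is the
entrywise image of the Gram matrix. -/
lemma toMatrix_baseChange {K : Type u} {V : Type v} [Field K] [AddCommGroup V] [Module K V]
    (L : Type w) [Field L] [Algebra K L] {n : Type*} [Fintype n] [DecidableEq n]
    (b : Basis n K V) (B : LinearMap.BilinForm K V) :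
    LinearMap.BilinForm.toMatrix (b.baseChange L) (LinearMap.BilinForm.baseChange L B)
      = (LinearMap.BilinForm.toMatrix b B).map (algebraMap K L) := by
  ext j k
  rw [Matrix.map_apply, LinearMap.BilinForm.toMatrix_apply, LinearMap.BilinForm.toMatrix_apply,
    Basis.baseChange_apply, Basis.baseChange_apply, LinearMap.BilinForm.baseChange_tmul]
  simp [Algebra.algebraMap_eq_smul_one]

/-- **Lemma.** Over an infinite field, the `K`-span of a nonsingular system of quadratic
forms contains a nondegenerate form. -/
theorem statement4 {K : Type u} {V : Type v} [Field K] [Infinite K] (hchar : (2 : K) ≠ 0)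
    [AddCommGroup V] [Module K V] [FiniteDimensional K V]
    {ι : Type*} (B : ι → LinearMap.BilinForm K V) (hB : ∀ i, (B i).IsSymm)
    (hns : IsNonsingularSystem B) :
    ∃ B' ∈ Submodule.span K (Set.range B), LinearMap.BilinForm.Nondegenerate B' := by
  classical
  obtain ⟨L, _, _, B', hmem, hnd⟩ := hns
  obtain ⟨c, rfl⟩ := (Finsupp.mem_span_range_iff_exists_finsupp).mp hmem
  set b : Basis (Fin (finrank K V)) K V := finBasis K V with hb
  set M : ι → Matrix (Fin (finrank K V)) (Fin (finrank K V)) K :=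
    fun i => LinearMap.BilinForm.toMatrix b (B i) with hM
  set P : MvPolynomial ι K :=
    (Matrix.of fun j k => ∑ i ∈ c.support,
      MvPolynomial.X i * MvPolynomial.C (M i j k)).det with hP
  -- the polynomial P is nonzero, since it is nonzero at the point `c` over `L`
  have hPne : P ≠ 0 := by
    intro h0
    have haeval : (MvPolynomial.aeval (fun i => c i) P : L)
        = (LinearMap.BilinForm.toMatrix (b.baseChange L)
            (c.sum fun i a => a • LinearMap.BilinForm.baseChange L (B i))).det := by
      rw [hP, AlgHom.map_det]
      congr 1
      ext j k
      rw [map_finsuppSum, Finsupp.sum]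
      simp only [AlgHom.mapMatrix_apply, Matrix.map_apply, Matrix.of_apply, map_sum, map_mul,
        MvPolynomial.aeval_X, MvPolynomial.aeval_C, Matrix.sum_apply, map_smul,
        toMatrix_baseChange, Matrix.smul_apply, smul_eq_mul, hM]
    have hdet := (LinearMap.BilinForm.nondegenerate_iff_det_ne_zero (b.baseChange L)).mp hnd
    rw [← haeval, h0, map_zero] at hdet
    exact hdet rfl
  -- pick a point over K where P is nonzero
  have : ¬ ∀ x : ι → K, MvPolynomial.eval x P = MvPolynomial.eval x 0 := by
    intro h
    exact hPne (MvPolynomial.funext h)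
  push_neg at this
  obtain ⟨x, hx⟩ := this
  rw [map_zero] at hx
  refine ⟨∑ i ∈ c.support, x i • B i, ?_, ?_⟩
  · exact Submodule.sum_mem _ fun i _ =>
      Submodule.smul_mem _ _ (Submodule.subset_span ⟨i, rfl⟩)
  · refine (LinearMap.BilinForm.nondegenerate_iff_det_ne_zero b).mpr ?_
    have heval : (MvPolynomial.eval x P : K)
        = (LinearMap.BilinForm.toMatrix b (∑ i ∈ c.support, x i • B i)).det := by
      rw [hP, RingHom.map_det]
      congr 1
      ext j k
      simp only [RingHom.mapMatrix_apply, Matrix.map_apply, Matrix.of_apply, map_sum, map_mul,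
        MvPolynomial.eval_X, MvPolynomial.eval_C, map_smul, Matrix.sum_apply,
        Matrix.smul_apply, smul_eq_mul, hM]
    rw [← heval]
    exact hx
end

section
/- Let (A, σ) be a finite-dimensional K-algebra with involution over a field K of characteristic ≠ 2, let n ∈ ℕ, and let f_n : A^n × A^n → A be the 1-hermitian form f_n((x_i)_{i=1}^n, (y_i)_{i=1}^n) = Σ_{i=1}^n x_i^σ y_i. Then the involution n×σ on M_n(A) is hyperbolic (i.e., there is an idempotent e ∈ M_n(A) with e^{n×σ} + e = 1) if and only if f_n is hyperbolic, i.e., A^n = U ⊕ W for right A-submodules U, W with f_n(U, U) = 0 and f_n(W, W) = 0. -/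
open Module

/-- The involution `n × σ` on `Mₙ(A)` is hyperbolic: there is an idempotent `e` with
`e^{n×σ} + e = 1`, where `(n×σ)(e) = (σ (e j i))_{i j}`. -/
def MatrixInvolutionHyperbolic {A : Type*} [Ring A] (σ : A → A) (n : ℕ) : Prop :=
  ∃ e : Matrix (Fin n) (Fin n) A, e * e = e ∧
    (Matrix.of fun i j => σ (e j i)) + e = 1

/-- **Proposition.** `n × σ` is hyperbolic iff the hermitian form
`f_n((x_i), (y_i)) = Σ x_i^σ y_i` on the right `A`-module `A^n` is hyperbolic. -/
theorem statement5 {K A : Type*} [Field K] (hchar : (2 : K) ≠ 0)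
    [Ring A] [Algebra K A] [FiniteDimensional K A]
    (σ : A → A)
    (hadd : ∀ x y : A, σ (x + y) = σ x + σ y)
    (hsmul : ∀ (c : K) (x : A), σ (c • x) = c • σ x)
    (hmul : ∀ x y : A, σ (x * y) = σ y * σ x)
    (hinvol : ∀ x : A, σ (σ x) = x)
    (n : ℕ) :
    MatrixInvolutionHyperbolic σ n ↔
      ∃ U W : Submodule Aᵐᵒᵖ (Fin n → A), IsCompl U W ∧
        (∀ x ∈ U, ∀ y ∈ U, ∑ i, σ (x i) * y i = 0) ∧
        (∀ x ∈ W, ∀ y ∈ W, ∑ i, σ (x i) * y i = 0) := by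
  classical
  have hzero : σ 0 = 0 := by
    have h := hadd 0 0
    rw [add_zero] at h
    exact left_eq_add.mp h
  have hone : σ 1 = 1 := by
    have h := hmul (σ 1) 1
    rw [mul_one, hinvol] at h
    rw [mul_one] at h
    exact h.symm
  have σsum : ∀ (f : Fin n → A), σ (∑ i, f i) = ∑ i, σ (f i) := by
    intro f
    exact map_sum (AddMonoidHom.mk' σ hadd) f Finset.univ
  -- the adjoint identity for any matrix M
  have hadj : ∀ (M : Matrix (Fin n) (Fin n) A) (x y : Fin n → A),
      ∑ i, σ (M.mulVec x i) * y i
        = ∑ j, σ (x j) * (Matrix.of fun i j => σ (M j i)).mulVec y j := by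
    intro M x y
    simp only [Matrix.mulVec, dotProduct, Matrix.of_apply]
    calc ∑ i, σ (∑ j, M i j * x j) * y i
        = ∑ i, (∑ j, σ (x j) * σ (M i j)) * y i := by
          refine Finset.sum_congr rfl fun i _ => ?_
          rw [σsum]
          congr 1
          exact Finset.sum_congr rfl fun j _ => hmul _ _
      _ = ∑ i, ∑ j, σ (x j) * (σ (M i j) * y i) := by
          refine Finset.sum_congr rfl fun i _ => ?_
          rw [Finset.sum_mul]
          exact Finset.sum_congr rfl fun j _ => mul_assoc _ _ _
      _ = ∑ j, σ (x j) * ∑ i, σ (M i j) * y i := by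
          rw [Finset.sum_comm]
          exact Finset.sum_congr rfl fun j _ => (Finset.mul_sum _ _ _).symm
  constructor
  · rintro ⟨e, hee, hsig⟩
    have hsig' : (Matrix.of fun i j => σ (e j i)) = 1 - e := eq_sub_of_add_eq hsig
    set π : (Fin n → A) →ₗ[Aᵐᵒᵖ] (Fin n → A) :=
      { toFun := fun x => e.mulVec x
        map_add' := fun x y => Matrix.mulVec_add e x y
        map_smul' := by
          intro c x
          funext i
          simp only [RingHom.id_apply, Pi.smul_apply, MulOpposite.smul_eq_mul_unop,
            Matrix.mulVec, dotProduct]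
          rw [Finset.sum_mul]
          exact Finset.sum_congr rfl fun j _ => (mul_assoc _ _ _).symm } with hπ
    have hπ_apply : ∀ x, π x = e.mulVec x := fun x => rfl
    have hidem : ∀ x, e.mulVec (e.mulVec x) = e.mulVec x := by
      intro x
      rw [Matrix.mulVec_mulVec, hee]
    refine ⟨LinearMap.range π, LinearMap.ker π, ?_, ?_, ?_⟩
    · constructor
      · rw [disjoint_iff_inf_le]
        rintro x ⟨hx1, hx2⟩
        obtain ⟨y, rfl⟩ := hx1
        rw [SetLike.mem_coe, LinearMap.mem_ker] at hx2
        have : π (π y) = π y := by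
          rw [hπ_apply, hπ_apply, hidem]
        rw [hx2] at this
        simp [← this]
      · rw [codisjoint_iff, eq_top_iff]
        intro x _
        refine Submodule.mem_sup.mpr ⟨π x, ⟨x, rfl⟩, x - π x, ?_, by abel⟩
        rw [LinearMap.mem_ker, map_sub]
        rw [hπ_apply, hπ_apply, hidem, sub_self]
    · rintro x ⟨a, rfl⟩ y ⟨b, rfl⟩
      rw [hπ_apply, hπ_apply, hadj e a (e.mulVec b), Matrix.mulVec_mulVec, hsig']
      have : (1 - e) * e = 0 := by
        rw [sub_mul, one_mul, hee, sub_self]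
      rw [this]
      simp [Matrix.zero_mulVec]
    · intro x hx y hy
      rw [LinearMap.mem_ker, hπ_apply] at hx hy
      have hx' : (Matrix.of fun i j => σ (e j i)).mulVec x = x := by
        rw [hsig', Matrix.sub_mulVec, Matrix.one_mulVec, hx, sub_zero]
      have h2 : (Matrix.of fun i j => σ ((Matrix.of fun i j => σ (e j i)) j i)) = e := by
        ext i j
        simp [hinvol]
      calc ∑ i, σ (x i) * y i
          = ∑ i, σ ((Matrix.of fun i j => σ (e j i)).mulVec x i) * y i := by rw [hx']
        _ = ∑ j, σ (x j) *
              (Matrix.of fun i j => σ ((Matrix.of fun i j => σ (e j i)) j i)).mulVec y j :=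
            hadj _ x y
        _ = 0 := by
            rw [h2, hy]
            simp
  · rintro ⟨U, W, hUW, hU, hW⟩
    set p : (Fin n → A) →ₗ[Aᵐᵒᵖ] (Fin n → A) :=
      U.subtype ∘ₗ U.projectionOnto W hUW with hp
    have hpU : ∀ x, p x ∈ U := fun x => SetLike.coe_mem _
    have hpp : ∀ x ∈ U, p x = x := by
      intro x hx
      have := Submodule.linearProjOfIsCompl_apply_left hUW ⟨x, hx⟩
      simp only [hp, LinearMap.comp_apply, Submodule.subtype_apply]
      rw [this]
    have hp0 : ∀ x ∈ W, p x = 0 := by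
      intro x hx
      have := Submodule.linearProjOfIsCompl_apply_right hUW ⟨x, hx⟩
      simp only [hp, LinearMap.comp_apply, Submodule.subtype_apply]
      rw [this]
      rfl
    have hdecomp : ∀ x : Fin n → A, ∃ u ∈ U, ∃ w ∈ W, u + w = x := by
      intro x
      have : x ∈ U ⊔ W := by rw [hUW.codisjoint.eq_top]; trivial
      exact Submodule.mem_sup.mp this
    set e : Matrix (Fin n) (Fin n) A := Matrix.of fun i j => p (Pi.single j 1) i with he
    have hrep : ∀ x : Fin n → A, p x = e.mulVec x := by
      intro x
      have hx : x = ∑ j, MulOpposite.op (x j) • Pi.single j (1 : A) := by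
        funext i
        simp [Pi.single_apply, MulOpposite.smul_eq_mul_unop, Finset.sum_apply]
      conv_lhs => rw [hx]
      rw [map_sum]
      funext i
      simp only [Finset.sum_apply, map_smul, Pi.smul_apply, MulOpposite.smul_eq_mul_unop,
        MulOpposite.unop_op, Matrix.mulVec, dotProduct, he, Matrix.of_apply]
    have key : ∀ v : Fin n → A, (e * e).mulVec v = e.mulVec v := by
      intro v
      rw [← Matrix.mulVec_mulVec, ← hrep v, ← hrep (p v)]
      exact hpp _ (hpU v)
    have hee : e * e = e := by
      ext i j
      have h := congrFun (key (Pi.single j 1)) i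
      simpa [Matrix.mulVec_single] using h
    -- biadditivity
    have Fadd_l : ∀ x x' y : Fin n → A,
        ∑ i, σ ((x + x') i) * y i = (∑ i, σ (x i) * y i) + ∑ i, σ (x' i) * y i := by
      intro x x' y
      rw [← Finset.sum_add_distrib]
      exact Finset.sum_congr rfl fun i _ => by simp [hadd, add_mul]
    have Fadd_r : ∀ x y y' : Fin n → A,
        ∑ i, σ (x i) * (y + y') i = (∑ i, σ (x i) * y i) + ∑ i, σ (x i) * y' i := by
      intro x y y'
      rw [← Finset.sum_add_distrib]
      exact Finset.sum_congr rfl fun i _ => by simp [mul_add]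
    have main : ∀ x y : Fin n → A,
        (∑ i, σ (p x i) * y i) + (∑ i, σ (x i) * p y i) = ∑ i, σ (x i) * y i := by
      intro x y
      obtain ⟨u, hu, w, hw, rfl⟩ := hdecomp x
      obtain ⟨u', hu', w', hw', rfl⟩ := hdecomp y
      have hpx : p (u + w) = u := by rw [map_add, hpp u hu, hp0 w hw, add_zero]
      have hpy : p (u' + w') = u' := by rw [map_add, hpp u' hu', hp0 w' hw', add_zero]
      rw [hpx, hpy, Fadd_r u u' w', Fadd_l u w u', Fadd_l u w (u' + w'),
        Fadd_r u u' w', Fadd_r w u' w',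
        hU u hu u' hu', hW w hw w' hw']
      abel
    refine ⟨e, hee, ?_⟩
    ext i j
    rw [Matrix.add_apply, Matrix.of_apply]
    have h := main (Pi.single i 1) (Pi.single j 1)
    have h1 : ∑ k, σ (p (Pi.single i 1) k) * (Pi.single j 1 : Fin n → A) k = σ (e j i) := by
      simp [Pi.single_apply, mul_ite, he]
    have h2 : ∑ k, σ ((Pi.single i 1 : Fin n → A) k) * p (Pi.single j 1) k = e i j := by
      simp [Pi.single_apply, apply_ite σ, hone, hzero, he]
    have h3 : ∑ k, σ ((Pi.single i 1 : Fin n → A) k) * (Pi.single j 1 : Fin n → A) k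
        = (1 : Matrix (Fin n) (Fin n) A) i j := by
      simp [Pi.single_apply, apply_ite σ, hone, hzero, Matrix.one_apply, eq_comm]
    rw [h1, h2, h3] at h
    exact h
end

section
/- Let (R, σ) be a ring with involution such that 2 is invertible in R, and let J be a nilpotent two-sided ideal of R with J^σ = J. Let σ̄ denote the induced involution r + J ↦ r^σ + J on R/J. Then every idempotent ε ∈ R/J satisfying ε^σ̄ + ε = 1 is the image of an idempotent e ∈ R satisfying e^σ + e = 1. In particular, σ is hyperbolic if and only if σ̄ is hyperbolic. -/
private lemma sqrt_aux_step {A : Type*} [CommRing A] (c n s t u : A) (k : ℕ) (hc : 2 * c = 1)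
    (hs : s * s = 1 - n + n ^ (k + 1) * t) (hu : 1 - s = n * u) :
    (s + c * (1 - n - s * s)) * (s + c * (1 - n - s * s))
      = 1 - n + n ^ (k + 2) * (u * t + n ^ k * (c * (c * (t * t)))) ∧
    1 - (s + c * (1 - n - s * s)) = n * (u + n ^ k * (c * t)) := by
  constructor
  · linear_combination (n * u + c ^ 2 * (2 * (n ^ (k + 1) * t))
      + c ^ 2 * (s * s - (1 - n + n ^ (k + 1) * t))) * hs
      + (s * s - 1 + n) * hu + (-(s * (s * s - 1 + n))) * hc
  · linear_combination hu + c * hs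

/-- **Lemma.** Let `(R,σ)` be a ring with involution in which `2` is invertible, and let
`π : R → S` be a surjective ring homomorphism whose kernel `J` is a nilpotent two-sided
ideal stable under `σ` (so `S ≅ R/J`), and let `σ̄` be the induced involution on `S`.
Then every idempotent `ε ∈ S` with `ε^σ̄ + ε = 1` lifts to an idempotent `e ∈ R` with
`e^σ + e = 1`; in particular `σ` is hyperbolic iff `σ̄` is hyperbolic. -/
theorem statement10 {R S : Type*} [Ring R] [Ring S] (h2 : IsUnit (2 : R))
    (σ : R → R)
    (hadd : ∀ x y : R, σ (x + y) = σ x + σ y)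
    (hmul : ∀ x y : R, σ (x * y) = σ y * σ x)
    (hinvol : ∀ x : R, σ (σ x) = x)
    (π : R →+* S) (hsurj : Function.Surjective π)
    -- the kernel `J` of `π` is nilpotent
    (hnilp : ∃ n : ℕ, 0 < n ∧ ∀ f : Fin n → R, (∀ i, π (f i) = 0) →
      (List.ofFn f).prod = 0)
    -- `J^σ = J`
    (hstable : ∀ r : R, π r = 0 → π (σ r) = 0)
    -- `σ̄` is the involution induced by `σ` on `S ≅ R/J`
    (σ' : S → S) (hcompat : ∀ r : R, π (σ r) = σ' (π r)) :
    (∀ ε : S, ε * ε = ε → σ' ε + ε = 1 →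
      ∃ e : R, e * e = e ∧ σ e + e = 1 ∧ π e = ε) ∧
    ((∃ e : R, e * e = e ∧ σ e + e = 1) ↔ ∃ ε : S, ε * ε = ε ∧ σ' ε + ε = 1) := by
  obtain ⟨N, hNpos, hprod⟩ := hnilp
  have hnil : ∀ x : R, π x = 0 → x ^ N = 0 := by
    intro x hx
    have := hprod (fun _ => x) (fun _ => hx)
    simpa using this
  -- basic facts about σ
  have hσ0 : σ 0 = 0 := by
    have h := hadd 0 0
    rw [add_zero] at h
    exact left_eq_add.mp h
  have hσ1 : σ 1 = 1 := by
    have h := hmul (σ 1) 1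
    simp only [mul_one, hinvol] at h
    exact h.symm
  have hσneg : ∀ x : R, σ (-x) = -σ x := by
    intro x
    have h := hadd x (-x)
    rw [add_neg_cancel, hσ0] at h
    exact eq_neg_of_add_eq_zero_right h.symm
  have hσsub : ∀ x y : R, σ (x - y) = σ x - σ y := by
    intro x y
    rw [sub_eq_add_neg, hadd, hσneg, sub_eq_add_neg]
  -- the inverse of 2
  obtain ⟨U, hU⟩ := h2
  obtain ⟨c, hc2, hc2'⟩ : ∃ c : R, 2 * c = 1 ∧ c * 2 = 1 :=
    ⟨↑U⁻¹, by rw [← hU]; exact U.mul_inv, by rw [← hU]; exact U.inv_mul⟩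
  have hccen : ∀ x : R, c * x = x * c := by
    intro x
    have h1 : c * (2 * x) * c = x * c := by
      rw [← mul_assoc c 2 x, hc2', one_mul]
    have h3 : c * (x * 2) * c = c * x := by
      rw [mul_assoc c (x * 2) c, mul_assoc x 2 c, hc2, mul_one]
    have h4 : (2 : R) * x = x * 2 := by rw [two_mul, mul_two]
    rw [← h3, ← h4, h1]
  have hσ2 : σ (2 : R) = 2 := by
    have h21 : (2 : R) = 1 + 1 := by norm_num
    rw [h21, hadd, hσ1]
  have hσc : σ c = c := by
    have h := hmul 2 c
    rw [hc2, hσ1, hσ2] at h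
    calc σ c = σ c * (2 * c) := by rw [hc2, mul_one]
      _ = (σ c * 2) * c := by rw [mul_assoc]
      _ = c := by rw [← h, one_mul]
  -- main lifting statement
  have main : ∀ ε : S, ε * ε = ε → σ' ε + ε = 1 →
      ∃ e : R, e * e = e ∧ σ e + e = 1 ∧ π e = ε := by
    intro ε hε hε1
    obtain ⟨f, hfidem, hπf⟩ := exists_isIdempotentElem_eq_of_ker_isNilpotent π
      (fun x hx => ⟨N, hnil x (by rwa [RingHom.mem_ker] at hx)⟩) ε (hsurj ε) hε
    have hf : f * f = f := hfidem
    set q : R := 1 - σ f with hqdef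
    have hσff : σ f * σ f = σ f := by rw [← hmul, hf]
    have hq : q * q = q := by
      have hexp : (1 - σ f) * (1 - σ f) = 1 - σ f - σ f + σ f * σ f := by noncomm_ring
      rw [hσff] at hexp
      rw [hqdef, hexp]; abel
    have hσ'ε : σ' ε = 1 - ε := by rw [← hε1]; abel
    have hπq : π q = ε := by
      rw [hqdef, map_sub, map_one, hcompat, hπf, hσ'ε]; abel
    have hσf_eq : σ f = 1 - q := by rw [hqdef]; abel
    have hσq : σ q = 1 - f := by rw [hqdef, hσsub, hσ1, hinvol]
    set a : R := f - q with hadef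
    set b : R := f + q - 1 with hbdef
    set m : R := a * a with hmdef
    have hσa : σ a = a := by
      rw [hadef, hσsub, hσq, hσf_eq]; abel
    have hσb : σ b = -b := by
      rw [hbdef, hσsub, hadd, hσ1, hσq, hσf_eq]; abel
    have hσm : σ m = m := by rw [hmdef, hmul, hσa]
    have hbb : b * b = 1 - m := by
      rw [hbdef, hmdef, hadef]
      linear_combination (norm := noncomm_ring) 2 * hf + 2 * hq
    have hab : a * b = -(b * a) := by
      rw [hadef, hbdef]
      linear_combination (norm := noncomm_ring) 2 * hf - 2 * hq
    have hmb : m * b = b * m := by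
      rw [hmdef]
      calc a * a * b = a * (a * b) := by rw [mul_assoc]
        _ = a * (-(b * a)) := by rw [hab]
        _ = -((a * b) * a) := by rw [mul_neg, mul_assoc]
        _ = -((-(b * a)) * a) := by rw [hab]
        _ = (b * a) * a := by rw [neg_mul, neg_neg]
        _ = b * (a * a) := by rw [mul_assoc]
    have hπa : π a = 0 := by rw [hadef, map_sub, hπf, hπq, sub_self]
    have hπm : π m = 0 := by rw [hmdef, map_mul, hπa, zero_mul]
    have hmN : m ^ N = 0 := hnil m hπm
    -- the commutative subring generated by m and c
    set T : Subring R := Subring.closure {m, c} with hTdef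
    have hsetcomm : ∀ x ∈ ({m, c} : Set R), ∀ y ∈ ({m, c} : Set R), x * y = y * x := by
      intro x hx y hy
      rcases hx with hx | hx <;> rcases hy with hy | hy <;> rw [hx, hy]
      · exact (hccen m).symm
      · exact hccen m
    letI : CommRing T := Subring.closureCommRingOfComm hsetcomm
    have hmem_m : m ∈ T := Subring.subset_closure (Or.inl rfl)
    have hmem_c : c ∈ T := Subring.subset_closure (Or.inr rfl)
    have hTcomm : ∀ x ∈ T, ∀ y ∈ T, x * y = y * x := by
      intro x hx y hy
      exact congrArg Subtype.val (mul_comm (⟨x, hx⟩ : T) ⟨y, hy⟩)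
    have hσT : ∀ x : R, x ∈ T → σ x = x := by
      intro x hx
      induction hx using Subring.closure_induction with
      | mem z hz => rcases hz with rfl | rfl; exacts [hσm, hσc]
      | zero => exact hσ0
      | one => exact hσ1
      | add x y hx hy ihx ihy => rw [hadd, ihx, ihy]
      | neg x hx ihx => rw [hσneg, ihx]
      | mul x y hx hy ihx ihy => rw [hmul, ihy, ihx, hTcomm y hy x hx]
    have hTb : ∀ x : R, x ∈ T → x * b = b * x := by
      intro x hx
      have hsub : ({m, c} : Set R) ⊆ ↑(Subring.centralizer ({b} : Set R)) := by
        intro z hz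
        rw [SetLike.mem_coe, Subring.mem_centralizer_iff]
        intro g hg
        rw [Set.mem_singleton_iff] at hg
        rw [hg]
        rcases hz with hz | hz <;> rw [hz]
        · exact hmb.symm
        · exact (hccen b).symm
      have hx' := Subring.closure_le.mpr hsub hx
      rw [Subring.mem_centralizer_iff] at hx'
      exact (hx' b rfl).symm
    -- construct the square root of 1 - m inside T
    set mt : T := ⟨m, hmem_m⟩ with hmtdef
    set ct : T := ⟨c, hmem_c⟩ with hctdef
    have hct2 : 2 * ct = 1 := by
      apply Subtype.ext
      push_cast
      exact hc2
    have sqrt : ∀ k : ℕ, ∃ s t u : T,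
        s * s = 1 - mt + mt ^ (k + 1) * t ∧ 1 - s = mt * u := by
      intro k
      induction k with
      | zero => exact ⟨1, 1, 0, by ring, by ring⟩
      | succ k ih =>
        obtain ⟨s, t, u, hs, hu⟩ := ih
        obtain ⟨h1, h2⟩ := sqrt_aux_step ct mt s t u k hct2 hs hu
        exact ⟨s + ct * (1 - mt - s * s), u * t + mt ^ k * (ct * (ct * (t * t))),
          u + mt ^ k * (ct * t), h1, h2⟩
    obtain ⟨st, tt, ut, hst, hut⟩ := sqrt N
    have hmtN : mt ^ N = 0 := by
      apply Subtype.ext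
      push_cast
      exact hmN
    have hst' : st * st = 1 - mt := by
      rw [hst, pow_succ, hmtN, zero_mul, zero_mul, add_zero]
    have hsT : (st : R) ∈ T := st.2
    have hss : (st : R) * (st : R) = 1 - m := by
      have h := congrArg (Subtype.val : T → R) hst'
      push_cast at h
      exact h
    have hsu : 1 - (st : R) = m * (ut : R) := by
      have h := congrArg (Subtype.val : T → R) hut
      push_cast at h
      exact h
    set s : R := (st : R) with hsdef
    have hσs : σ s = s := hσT s hsT
    have hsb : s * b = b * s := hTb s hsT
    -- s is a unit
    have hmu_comm : m * (ut : R) = (ut : R) * m := hTcomm m hmem_m _ ut.2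
    have hnilmu : IsNilpotent (m * (ut : R)) := by
      refine ⟨N, ?_⟩
      have hcm : Commute m (ut : R) := hmu_comm
      rw [hcm.mul_pow, hmN, zero_mul]
    have hsunit : IsUnit s := by
      have h := IsNilpotent.isUnit_one_sub hnilmu
      have heq : (1 : R) - m * (ut : R) = s := by rw [← hsu]; abel
      rwa [heq] at h
    obtain ⟨W, hW⟩ := hsunit
    obtain ⟨w, hsw, hws⟩ : ∃ w : R, s * w = 1 ∧ w * s = 1 :=
      ⟨↑W⁻¹, by rw [← hW]; exact W.mul_inv, by rw [← hW]; exact W.inv_mul⟩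
    have hσw : σ w = w := by
      have h1 : σ w * s = 1 := by
        have h := congrArg σ hsw
        rw [hmul, hσs, hσ1] at h
        exact h
      calc σ w = σ w * (s * w) := by rw [hsw, mul_one]
        _ = (σ w * s) * w := by rw [mul_assoc]
        _ = w := by rw [h1, one_mul]
    have hwb : w * b = b * w := by
      calc w * b = w * b * (s * w) := by rw [hsw, mul_one]
        _ = w * (b * s) * w := by rw [← mul_assoc, ← mul_assoc]
        _ = w * (s * b) * w := by rw [hsb]
        _ = (w * s) * (b * w) := by rw [← mul_assoc, ← mul_assoc, mul_assoc w s b]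
        _ = b * w := by rw [hws, one_mul]
    have hπs : π s = 1 := by
      have heq : s = 1 - m * (ut : R) := by rw [← hsu]; abel
      rw [heq, map_sub, map_one, map_mul, hπm, zero_mul, sub_zero]
    have hπw : π w = 1 := by
      have h := congrArg π hws
      rw [map_mul, hπs, mul_one, map_one] at h
      exact h
    -- the hyperbolic idempotent
    set v : R := b * w with hvdef
    have hvv : v * v = 1 := by
      calc v * v = b * (w * b) * w := by
            rw [hvdef, mul_assoc, ← mul_assoc w b w, ← mul_assoc]
        _ = b * (b * w) * w := by rw [hwb]
        _ = (b * b) * (w * w) := by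
            rw [← mul_assoc, mul_assoc (b * b) w w]
        _ = (s * s) * (w * w) := by rw [hbb, hss]
        _ = s * (s * w) * w := by
            rw [mul_assoc s s (w * w), ← mul_assoc s w w, ← mul_assoc]
        _ = 1 := by rw [hsw, mul_one, hsw]
    have hσv : σ v = -v := by
      rw [hvdef, hmul, hσw, hσb, mul_neg, hwb]
    have hπb : π b = ε + ε - 1 := by
      rw [hbdef, map_sub, map_add, map_one, hπf, hπq]
    have hπv : π v = ε + ε - 1 := by
      rw [hvdef, map_mul, hπb, hπw, mul_one]
    refine ⟨c * (1 + v), ?_, ?_, ?_⟩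
    · have h1v : (1 + v) * (1 + v) = 2 * (1 + v) := by
        have hexp : (1 + v) * (1 + v) = 1 + v + v + v * v := by noncomm_ring
        rw [hexp, hvv]; noncomm_ring
      calc c * (1 + v) * (c * (1 + v)) = c * (c * ((1 + v) * (1 + v))) := by
            rw [mul_assoc, ← mul_assoc (1 + v) c (1 + v), ← hccen (1 + v), mul_assoc]
        _ = c * (c * (2 * (1 + v))) := by rw [h1v]
        _ = c * ((c * 2) * (1 + v)) := by
            rw [show c * (2 * (1 + v)) = (c * 2) * (1 + v) from (mul_assoc c 2 (1 + v)).symm]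
        _ = c * (1 + v) := by rw [hc2', one_mul]
    · have hσ1v : σ (1 + v) = 1 - v := by rw [hadd, hσ1, hσv, sub_eq_add_neg]
      calc σ (c * (1 + v)) + c * (1 + v) = σ (1 + v) * σ c + c * (1 + v) := by rw [hmul]
        _ = (1 - v) * c + c * (1 + v) := by rw [hσ1v, hσc]
        _ = c * (1 - v) + c * (1 + v) := by rw [← hccen]
        _ = c * 2 := by noncomm_ring
        _ = 1 := hc2'
    · have h1 : π (c * (1 + v)) = π c * (1 + (ε + ε - 1)) := by
        rw [map_mul, map_add, map_one, hπv]
      have h2 : (1 : S) + (ε + ε - 1) = (1 + 1) * ε := by noncomm_ring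
      have h3 : π c * ((1 : S) + 1) = 1 := by
        have h4 : ((1 : S) + 1) = π (1 + 1) := by rw [map_add, map_one]
        rw [h4, ← map_mul, show (1 : R) + 1 = 2 from one_add_one_eq_two, hc2', map_one]
      rw [h1, h2, ← mul_assoc, h3, one_mul]
  refine ⟨main, ?_, ?_⟩
  · rintro ⟨e, he, hse⟩
    exact ⟨π e, by rw [← map_mul, he], by rw [← hcompat, ← map_add, hse, map_one]⟩
  · rintro ⟨ε, hε, hε1⟩
    obtain ⟨e, h1, h2, _⟩ := main ε hε hε1
    exact ⟨e, h1, h2⟩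
end

section
/- Let K be a field of characteristic ≠ 2, let (A, σ) be a finite-dimensional K-algebra with involution, and let α ∈ K^× be such that neither α nor −α is a square in K. If both base-changed involutions σ ⊗ id on A ⊗_K K(√α) and on A ⊗_K K(√−α) are hyperbolic, then 2×σ (the involution (a_ij) ↦ (a_ji^σ) on M_2(A)) is hyperbolic. -/
open Module TensorProduct Polynomial

/-- A ring with involution is hyperbolic if it contains an idempotent `e` with
`e^σ + e = 1`. -/
def InvolutionHyperbolic {B : Type*} [Ring B] (τ : B → B) : Prop :=
  ∃ e : B, e * e = e ∧ τ e + e = 1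

namespace Statement12Aux

variable {K A : Type*} [Field K] [Ring A] [Algebra K A]

lemma lcomm {x y : A} (h : x * y = y * x) (z : A) : x * (y * z) = y * (x * z) := by
  rw [← mul_assoc, h, mul_assoc]

lemma commute_aeval {x w : A} (h : Commute x w) (P : K[X]) :
    Commute x (Polynomial.aeval w P) := by
  induction P using Polynomial.induction_on' with
  | add p q hp hq => rw [map_add]; exact hp.add_right hq
  | monomial n a =>
      rw [Polynomial.aeval_monomial]
      exact Commute.mul_right ((Algebra.commutes a x).symm) (h.pow_right n)

-- Fitting data for an integral element
lemma fitting [FiniteDimensional K A] (τ : A) :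
    ∃ (m : ℕ) (Y : K[X]), τ^(m+1) = τ^(m+1+1) * Polynomial.aeval τ Y := by
  obtain ⟨p, pmonic, hp⟩ := IsIntegral.of_finite K τ
  obtain ⟨q, hpq, hqnd⟩ := p.exists_eq_pow_rootMultiplicity_mul_and_not_dvd pmonic.ne_zero 0
  simp only [map_zero, sub_zero] at hpq hqnd
  have hc : q.coeff 0 ≠ 0 := fun hc0 => hqnd (X_dvd_iff.mpr hc0)
  set m := p.rootMultiplicity 0 with hm
  refine ⟨m, C (-(q.coeff 0)⁻¹) * q.divX, ?_⟩
  have hq' : (X : K[X]) * q.divX + C (q.coeff 0) = q := X_mul_divX_add q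
  have h0 : τ^m * Polynomial.aeval τ q = 0 := by
    have h := hp
    rw [← Polynomial.aeval_def, hpq, map_mul, map_pow, Polynomial.aeval_X] at h
    exact h
  have haq : Polynomial.aeval τ q
      = τ * Polynomial.aeval τ q.divX + algebraMap K A (q.coeff 0) := by
    conv_lhs => rw [← hq']
    rw [map_add, map_mul, Polynomial.aeval_X, Polynomial.aeval_C]
  rw [haq, mul_add] at h0
  -- h0 : τ^m * (τ * z) + τ^m * algebraMap c = 0
  have h1 : τ^m * (τ * Polynomial.aeval τ q.divX) = - (τ^m * algebraMap K A (q.coeff 0)) := by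
    exact eq_neg_of_add_eq_zero_left h0
  rw [map_mul, Polynomial.aeval_C]
  set z := Polynomial.aeval τ q.divX with hz
  have hcz : Commute τ z := commute_aeval (Commute.refl τ) q.divX
  calc τ^(m+1)
      = -(-(τ^(m+1))) := (neg_neg _).symm
    _ = -(algebraMap K A (-(q.coeff 0)⁻¹) * (τ^(m+1) * algebraMap K A (q.coeff 0))) := by
        rw [← Algebra.commutes (q.coeff 0) (τ^(m+1)), ← mul_assoc, ← map_mul]
        have : (-(q.coeff 0)⁻¹) * (q.coeff 0) = -1 := by
          field_simp
        rw [this, map_neg, map_one, neg_mul, one_mul]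
    _ = algebraMap K A (-(q.coeff 0)⁻¹) * -(τ^(m+1) * algebraMap K A (q.coeff 0)) := by
        rw [mul_neg]
    _ = algebraMap K A (-(q.coeff 0)⁻¹) * -(τ * (τ^m * algebraMap K A (q.coeff 0))) := by
        rw [pow_succ', mul_assoc]
    _ = algebraMap K A (-(q.coeff 0)⁻¹) * (τ * -(τ^m * algebraMap K A (q.coeff 0))) := by
        rw [mul_neg, mul_neg, mul_neg]
    _ = algebraMap K A (-(q.coeff 0)⁻¹) * (τ * (τ^m * (τ * z))) := by rw [← h1]
    _ = algebraMap K A (-(q.coeff 0)⁻¹) * (τ^(m+1+1) * z) := by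
        rw [show τ^(m+1+1) = τ * (τ^m * τ) by rw [pow_succ' τ (m+1), pow_succ τ m],
          mul_assoc, mul_assoc, hcz.eq]
    _ = τ^(m+1+1) * (algebraMap K A (-(q.coeff 0)⁻¹) * z) :=
        (lcomm ((Algebra.commutes (-(q.coeff 0)⁻¹) (τ^(m+1+1))).symm) z).symm

variable (σ : A →ₗ[K] A)

lemma sig_one (hmul : ∀ x y : A, σ (x * y) = σ y * σ x)
    (hinvol : ∀ x : A, σ (σ x) = x) : σ 1 = 1 := by
  have h1 : ∀ x : A, σ x = σ 1 * σ x := fun x => by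
    conv_lhs => rw [← mul_one x]
    rw [hmul]
  have h2 := h1 (σ 1)
  rw [hinvol] at h2
  simpa using h2.symm

lemma extract (σ : A →ₗ[K] A)
    (hmul : ∀ x y : A, σ (x * y) = σ y * σ x)
    (hone : σ 1 = 1) (β : K)
    (h : InvolutionHyperbolic
      (LinearMap.rTensor (AdjoinRoot (X ^ 2 - C β)) σ :
        A ⊗[K] AdjoinRoot (X ^ 2 - C β) → A ⊗[K] AdjoinRoot (X ^ 2 - C β))) :
    ∃ s t : A, σ s = -s ∧ σ t = -t ∧ s * t = -(t * s) ∧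
      s * s + algebraMap K A β * (t * t) = 1 := by
  classical
  obtain ⟨e, he2, heσ⟩ := h
  have hmonic : (X ^ 2 - C β).Monic := monic_X_pow_sub_C β (by norm_num)
  set R := AdjoinRoot (X ^ 2 - C β) with hR
  set pb : PowerBasis K R := AdjoinRoot.powerBasis' hmonic with hpb
  have hdim : pb.dim = 2 := by
    have : pb.dim = (X ^ 2 - C β).natDegree := rfl
    rw [this, natDegree_X_pow_sub_C]
  set B : Basis (Fin 2) K R := pb.basis.reindex (finCongr hdim) with hB
  have hgen : pb.gen = AdjoinRoot.root (X ^ 2 - C β) := rfl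
  have hB0 : B 0 = 1 := by
    rw [hB, Module.Basis.reindex_apply, PowerBasis.coe_basis]
    norm_num
  have hB1 : B 1 = AdjoinRoot.root (X ^ 2 - C β) := by
    rw [hB, Module.Basis.reindex_apply, PowerBasis.coe_basis]
    rw [hgen]
    norm_num
  -- the coordinate maps
  set Φ : Fin 2 → (A ⊗[K] R →ₗ[K] A) := fun i =>
    (TensorProduct.rid K A).toLinearMap ∘ₗ (LinearMap.lTensor A (B.coord i)) with hΦ
  have hΦtmul : ∀ (i : Fin 2) (x : A) (w : R), Φ i (x ⊗ₜ[K] w) = B.repr w i • x := by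
    intro i x w
    rw [hΦ]
    simp [Basis.coord_apply]
  have hrep : ∀ z : A ⊗[K] R, z = (Φ 0 z) ⊗ₜ[K] B 0 + (Φ 1 z) ⊗ₜ[K] B 1 := by
    intro z
    induction z using TensorProduct.induction_on with
    | zero => simp
    | tmul x w =>
        have hw := B.sum_repr w
        rw [Fin.sum_univ_two] at hw
        rw [hΦtmul, hΦtmul]
        calc x ⊗ₜ[K] w = x ⊗ₜ[K] (B.repr w 0 • B 0 + B.repr w 1 • B 1) := by rw [hw]
        _ = (B.repr w 0 • x) ⊗ₜ[K] B 0 + (B.repr w 1 • x) ⊗ₜ[K] B 1 := by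
              rw [tmul_add, tmul_smul, tmul_smul, smul_tmul', smul_tmul']
    | add u v hu hv =>
        rw [map_add, map_add]
        conv_lhs => rw [hu, hv]
        rw [add_tmul, add_tmul]
        abel
  have hcomp : ∀ x y : A, x ⊗ₜ[K] B 0 + y ⊗ₜ[K] B 1 = 0 → x = 0 ∧ y = 0 := by
    intro x y hxy
    have h0 := congrArg (Φ 0) hxy
    have h1 := congrArg (Φ 1) hxy
    rw [map_add, hΦtmul, hΦtmul, Basis.repr_self, Basis.repr_self] at h0 h1
    simp [Finsupp.single_apply] at h0 h1
    exact ⟨h0, h1⟩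
  set a := Φ 0 e with ha
  set b := Φ 1 e with hb
  have he : e = a ⊗ₜ[K] B 0 + b ⊗ₜ[K] B 1 := hrep e
  have hr2 : AdjoinRoot.root (X ^ 2 - C β) * AdjoinRoot.root (X ^ 2 - C β)
      = algebraMap K R β := by
    have h := AdjoinRoot.eval₂_root (X ^ 2 - C β)
    rw [eval₂_sub, eval₂_pow, eval₂_X, eval₂_C] at h
    have h2 := sub_eq_zero.mp h
    rw [← pow_two, h2, AdjoinRoot.algebraMap_eq]
  have hmulform : ∀ x y x' y' : A,
      (x ⊗ₜ[K] B 0 + y ⊗ₜ[K] B 1) * (x' ⊗ₜ[K] B 0 + y' ⊗ₜ[K] B 1)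
        = (x * x' + algebraMap K A β * (y * y')) ⊗ₜ[K] B 0
          + (x * y' + y * x') ⊗ₜ[K] B 1 := by
    intro x y x' y'
    rw [hB0, hB1]
    rw [add_mul, mul_add, mul_add]
    rw [Algebra.TensorProduct.tmul_mul_tmul, Algebra.TensorProduct.tmul_mul_tmul,
        Algebra.TensorProduct.tmul_mul_tmul, Algebra.TensorProduct.tmul_mul_tmul]
    rw [one_mul, mul_one, one_mul, hr2]
    have hy : (y * y') ⊗ₜ[K] (algebraMap K R β)
        = (algebraMap K A β * (y * y')) ⊗ₜ[K] (1:R) := by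
      rw [Algebra.algebraMap_eq_smul_one, tmul_smul, smul_tmul', Algebra.smul_def]
    rw [hy, add_tmul, add_tmul]
    abel
  have hcomp' : ∀ x y x' y' : A,
      x ⊗ₜ[K] B 0 + y ⊗ₜ[K] B 1 = x' ⊗ₜ[K] B 0 + y' ⊗ₜ[K] B 1 → x = x' ∧ y = y' := by
    intro x y x' y' hxy
    have hz : (x - x') ⊗ₜ[K] B 0 + (y - y') ⊗ₜ[K] B 1 = 0 := by
      rw [sub_tmul, sub_tmul]
      calc x ⊗ₜ[K] B 0 - x' ⊗ₜ[K] B 0 + (y ⊗ₜ[K] B 1 - y' ⊗ₜ[K] B 1)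
          = (x ⊗ₜ[K] B 0 + y ⊗ₜ[K] B 1) - (x' ⊗ₜ[K] B 0 + y' ⊗ₜ[K] B 1) := by abel
        _ = 0 := by rw [hxy, sub_self]
    obtain ⟨h1', h2'⟩ := hcomp _ _ hz
    exact ⟨sub_eq_zero.mp h1', sub_eq_zero.mp h2'⟩
  have heq : (a * a + algebraMap K A β * (b * b)) ⊗ₜ[K] B 0
      + (a * b + b * a) ⊗ₜ[K] B 1 = a ⊗ₜ[K] B 0 + b ⊗ₜ[K] B 1 := by
    have h := he2
    rw [he, hmulform] at h
    exact h
  obtain ⟨eqa, eqb⟩ := hcomp' _ _ _ _ heq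
  have hσe : (LinearMap.rTensor R σ) e = (σ a) ⊗ₜ[K] B 0 + (σ b) ⊗ₜ[K] B 1 := by
    conv_lhs => rw [he]
    rw [map_add, LinearMap.rTensor_tmul, LinearMap.rTensor_tmul]
  have hone' : (1 : A ⊗[K] R) = (1:A) ⊗ₜ[K] B 0 + (0:A) ⊗ₜ[K] B 1 := by
    rw [hB0, zero_tmul, add_zero, Algebra.TensorProduct.one_def]
  have heq2 : (σ a + a) ⊗ₜ[K] B 0 + (σ b + b) ⊗ₜ[K] B 1
      = (1:A) ⊗ₜ[K] B 0 + (0:A) ⊗ₜ[K] B 1 := by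
    rw [← hone']
    calc (σ a + a) ⊗ₜ[K] B 0 + (σ b + b) ⊗ₜ[K] B 1
        = ((σ a) ⊗ₜ[K] B 0 + (σ b) ⊗ₜ[K] B 1) + (a ⊗ₜ[K] B 0 + b ⊗ₜ[K] B 1) := by
          rw [add_tmul, add_tmul]; abel
      _ = 1 := by rw [← hσe, ← he]; exact heσ
  obtain ⟨eqc, eqd⟩ := hcomp' _ _ _ _ heq2
  have hσa : σ a = 1 - a := eq_sub_of_add_eq eqc
  have hσb : σ b = -b := eq_neg_of_add_eq_zero_left eqd
  refine ⟨a + a - 1, b + b, ?_, ?_, ?_, ?_⟩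
  · rw [map_sub, map_add, hσa, hone]
    abel
  · rw [map_add, hσb]
    abel
  · have h3 : (a+a-1)*(b+b) + (b+b)*(a+a-1)
        = ((a*b + b*a) + (a*b + b*a) + (a*b + b*a) + (a*b + b*a)) - (b+b+b+b) := by
      noncomm_ring
    rw [eqb] at h3
    have h3' : (a+a-1)*(b+b) + (b+b)*(a+a-1) = 0 := by rw [h3]; abel
    exact eq_neg_of_add_eq_zero_left h3'
  · have h4 : (a+a-1)*(a+a-1) + algebraMap K A β*((b+b)*(b+b))
        = ((a*a + algebraMap K A β*(b*b)) + (a*a + algebraMap K A β*(b*b))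
          + (a*a + algebraMap K A β*(b*b)) + (a*a + algebraMap K A β*(b*b)))
          - (a+a+a+a) + 1 := by
      noncomm_ring
    rw [eqa] at h4
    rw [h4]
    abel

lemma sig_algmul' (k : K) (x : A) :
    σ (algebraMap K A k * x) = algebraMap K A k * σ x := by
  rw [← Algebra.smul_def, map_smul, Algebra.smul_def]

lemma sig_pow' (hmul : ∀ x y : A, σ (x * y) = σ y * σ x)
    (hone : σ 1 = 1) {x : A} (hx : σ x = x) (n : ℕ) :
    σ (x ^ n) = x ^ n := by
  induction n with
  | zero => simpa using hone
  | succ n ih =>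
      rw [pow_succ, hmul, hx, ih]
      exact ((Commute.refl x).pow_right n).eq

lemma sig_aeval (hmul : ∀ x y : A, σ (x * y) = σ y * σ x)
    (hone : σ 1 = 1) {x : A} (hx : σ x = x) (P : K[X]) :
    σ (Polynomial.aeval x P) = Polynomial.aeval x P := by
  induction P using Polynomial.induction_on' with
  | add p q hp hq => rw [map_add, map_add, hp, hq]
  | monomial n a =>
      rw [Polynomial.aeval_monomial, sig_algmul' σ, sig_pow' σ hmul hone hx]

lemma sqrt_poly (hchar : (2:K) ≠ 0) (M : ℕ) :
    ∃ G H : K[X], (1 - X) * G^2 = 1 + X^(M+1) * H := by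
  induction M with
  | zero => exact ⟨1, -1, by ring⟩
  | succ M ih =>
      obtain ⟨G, H, hGH⟩ := ih
      have h2c : (C ((2:K)⁻¹) : K[X]) + C ((2:K)⁻¹) = 1 := by
        rw [← C_add, ← two_mul, mul_inv_cancel₀ hchar, C_1]
      refine ⟨G * (1 - C ((2:K)⁻¹) * X^(M+1) * H),
        X^M * ((C ((2:K)⁻¹)^2 - 1) * H^2 + C ((2:K)⁻¹)^2 * X^(M+1) * H^3), ?_⟩
      linear_combination ((1 - C ((2:K)⁻¹) * X^(M+1) * H)^2) * hGH +
        (-(X^(M+1)*H + (X^(M+1)*H)^2)) * h2c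

lemma lemmaA [FiniteDimensional K A]
    (hmul : ∀ x y : A, σ (x * y) = σ y * σ x)
    (hinvol : ∀ x : A, σ (σ x) = x)
    (hone : σ 1 = 1)
    (hchar : (2:K) ≠ 0)
    (β : K) (s t : A) (hs : σ s = -s) (ht : σ t = -t)
    (hst : s * t = -(t * s))
    (hsq : s * s + algebraMap K A β * (t * t) = 1) :
    ∃ n : A, σ n * n = algebraMap K A (-β) ∧ n * σ n = algebraMap K A (-β) := by
  have hts : t * s = -(s * t) := by rw [hst, neg_neg]
  have hsτ : Commute s (t * t) := by
    show s * (t*t) = (t*t) * s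
    calc s * (t*t) = (s*t)*t := by rw [mul_assoc]
      _ = -(t*s)*t := by rw [hst]
      _ = -(t*(s*t)) := by rw [neg_mul, mul_assoc]
      _ = -(t*(-(t*s))) := by rw [hst]
      _ = t*(t*s) := by rw [mul_neg, neg_neg]
      _ = (t*t)*s := by rw [mul_assoc]
  have htτ : Commute t (t * t) := (Commute.refl t).mul_right (Commute.refl t)
  have hστ : σ (t*t) = t*t := by rw [hmul, ht, neg_mul_neg]
  obtain ⟨m, Y, hrel⟩ := fitting (K := K) (t*t)
  set Ta : K[X] →ₐ[K] A := Polynomial.aeval (t*t) with hTa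
  have Cs : ∀ P, Commute s (Ta P) := fun P => commute_aeval hsτ P
  have Ct : ∀ P, Commute t (Ta P) := fun P => commute_aeval htτ P
  have Cσ : ∀ P, σ (Ta P) = Ta P := fun P => sig_aeval σ hmul hone hστ P
  have CT : ∀ P Q, Commute (Ta P) (Ta Q) := fun P Q =>
    commute_aeval ((commute_aeval (Commute.refl (t*t)) P).symm) Q
  have hrelP : Ta (X^(m+1) - X^(m+1+1) * Y) = 0 := by
    rw [hTa, map_sub, map_mul, map_pow, map_pow, Polynomial.aeval_X]
    rw [hrel]
    exact sub_self _
  have Tcong : ∀ P Q H : K[X], P = Q + (X^(m+1) - X^(m+1+1) * Y) * H → Ta P = Ta Q := by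
    intro P Q H h
    rw [h, map_add, map_mul, hrelP, zero_mul, add_zero]
  set S : K[X] := ∑ k ∈ Finset.range (m+1), X^k * Y^k with hS
  have hrel2 : ∀ n : ℕ, X^(m+1) - X^(m+1+n) * Y^n
      = (X^(m+1) - X^(m+1+1) * Y) * (∑ k ∈ Finset.range n, X^k * Y^k) := by
    intro n
    induction n with
    | zero => simp
    | succ n ih =>
        rw [Finset.sum_range_succ, mul_add, ← ih]
        ring
  have hrel2' : X^(m+1) - X^(m+1+(m+1)) * Y^(m+1)
      = (X^(m+1) - X^(m+1+1) * Y) * S := hrel2 (m+1)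
  -- the commutative elements
  obtain ⟨G, Hs, hGH⟩ := sqrt_poly hchar m
  set βA : A := algebraMap K A β with hβAdef
  have hβATa : βA = Ta (C β) := by rw [hβAdef, hTa, Polynomial.aeval_C]
  have htX : t * t = Ta X := by rw [hTa, Polynomial.aeval_X]
  set f : A := Ta (X^(m+1) * Y^(m+1)) with hfdef
  set g : A := Ta (1 - X^(m+1) * Y^(m+1)) with hgdef
  set c₁ : A := Ta (X^m * Y^(m+1) * (X^(m+1) * Y^(m+1))) with hc₁def
  set βτ : A := Ta (C β * X) with hβτdef
  set ν : A := Ta (C β * (X * (1 - X^(m+1) * Y^(m+1)))) with hνdef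
  set χ : A := Ta (G.comp (C β * (X * (1 - X^(m+1) * Y^(m+1))))) with hχdef
  -- basic commutative facts
  have hff : f * f = f := by
    rw [hfdef, ← map_mul]
    exact Tcong _ _ (-(Y^(m+1) * S)) (by linear_combination (-(Y^(m+1))) * hrel2')
  have hgg : g * g = g := by
    rw [hgdef, ← map_mul]
    exact Tcong _ _ (-(Y^(m+1) * S)) (by linear_combination (-(Y^(m+1))) * hrel2')
  have hfg0 : f * g = 0 := by
    rw [hfdef, hgdef, ← map_mul, show (0:A) = Ta 0 from (map_zero Ta).symm]
    exact Tcong _ _ (Y^(m+1) * S) (by linear_combination (Y^(m+1)) * hrel2')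
  have hgf0 : g * f = 0 := by
    rw [hfdef, hgdef, ← map_mul, show (0:A) = Ta 0 from (map_zero Ta).symm]
    exact Tcong _ _ (Y^(m+1) * S) (by linear_combination (Y^(m+1)) * hrel2')
  have hfg1 : f + g = 1 := by
    rw [hfdef, hgdef, ← map_add,
      show (X^(m+1) * Y^(m+1)) + (1 - X^(m+1) * Y^(m+1)) = 1 by ring, map_one]
  have hc₁f : c₁ * f = c₁ := by
    rw [hc₁def, hfdef, ← map_mul]
    exact Tcong _ _ (X^m*Y^(m+1)*(-(Y^(m+1)*S)))
      (by linear_combination (X^m*Y^(m+1)*(-(Y^(m+1)))) * hrel2')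
  have hνg : ν = βτ * g := by
    rw [hνdef, hβτdef, hgdef, ← map_mul]
    congr 1
    ring
  have hgpow : ∀ k : ℕ, g^(k+1) = g := by
    intro k
    induction k with
    | zero => exact pow_one g
    | succ k ih => rw [pow_succ, ih, hgg]
  have hνpow : ν^(m+1) = 0 := by
    rw [hνg, (CT (C β * X) (1 - X^(m+1) * Y^(m+1))).mul_pow, hgpow m]
    rw [hgdef, ← map_pow, ← map_mul, show (0:A) = Ta 0 from (map_zero Ta).symm]
    exact Tcong _ _ ((C β)^(m+1) * S)
      (by linear_combination ((C β)^(m+1)) * hrel2')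
  have hχfact : (1 - ν) * χ^2 = 1 := by
    have hcomp := congrArg (fun P : K[X] => P.comp (C β * (X * (1 - X^(m+1)*Y^(m+1))))) hGH
    simp only [Polynomial.mul_comp, Polynomial.sub_comp, Polynomial.one_comp,
      Polynomial.pow_comp, Polynomial.X_comp, Polynomial.add_comp] at hcomp
    have hνalt : ν = Ta (C β) * (Ta X * (1 - Ta (X^(m+1)) * Ta (Y^(m+1)))) := by
      rw [hνdef]
      simp only [map_mul, map_sub, map_one]
    have h2 := congrArg Ta hcomp
    simp only [map_mul, map_sub, map_one, map_add, map_pow] at h2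
    rw [map_pow, map_pow] at hνalt
    rw [← hνalt, hνpow, zero_mul, add_zero] at h2
    exact h2
  -- noncommutative computations
  have hβτval : βτ = βA * (t * t) := by
    rw [hβτdef, map_mul, hβAdef, hTa, Polynomial.aeval_C, Polynomial.aeval_X]
  have hsqs : s * s = 1 - βτ := by
    rw [hβτval]
    exact eq_sub_of_add_eq hsq
  have h1s : (1 - s) * (s + 1) = βτ := by
    have e1 : (1 - s) * (s + 1) = 1 - s * s := by noncomm_ring
    rw [e1, hsqs, sub_sub_cancel]
  have h1s' : (s + 1) * (1 - s) = βτ := by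
    have e1 : (s + 1) * (1 - s) = 1 - s * s := by noncomm_ring
    rw [e1, hsqs, sub_sub_cancel]
  -- u and its properties
  set u : A := s * (χ * g) with hudef
  have hgχ : g * χ = χ * g := (CT _ _).eq
  have hsχg : Commute s (χ * g) := (Cs _).mul_right (Cs _)
  have hu2 : u * u = g := by
    have hcm : Commute (χ * χ) (1 - βτ) :=
      ((Commute.one_right _).sub_right ((CT _ _).mul_left (CT _ _)))
    calc u * u = s * ((χ*g) * (s * (χ*g))) := by rw [hudef, mul_assoc]
      _ = s * (s * ((χ*g) * (χ*g))) := by rw [lcomm hsχg.symm.eq]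
      _ = (s*s) * ((χ*g)*(χ*g)) := by rw [← mul_assoc]
      _ = (1 - βτ) * ((χ*g)*(χ*g)) := by rw [hsqs]
      _ = (1 - βτ) * (χ * (g * (χ * g))) := by rw [mul_assoc χ g (χ * g)]
      _ = (1 - βτ) * (χ * (χ * (g * g))) := by rw [lcomm hgχ]
      _ = (1 - βτ) * ((χ * χ) * (g * g)) := by rw [← mul_assoc χ χ (g*g)]
      _ = (1 - βτ) * ((χ * χ) * g) := by rw [hgg]
      _ = ((1 - βτ) * (χ * χ)) * g := by rw [← mul_assoc]
      _ = ((χ * χ) * (1 - βτ)) * g := by rw [hcm.symm.eq]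
      _ = (χ * χ) * ((1 - βτ) * g) := by rw [mul_assoc]
      _ = (χ * χ) * ((1 - ν) * g) := by
            rw [sub_mul, sub_mul, one_mul, hνg, mul_assoc βτ g g, hgg]
      _ = ((χ * χ) * (1 - ν)) * g := by rw [← mul_assoc]
      _ = ((1 - ν) * (χ * χ)) * g := by
            rw [((Commute.one_right (χ*χ)).sub_right ((CT _ _).mul_left (CT _ _))).eq]
      _ = ((1 - ν) * χ^2) * g := by rw [pow_two]
      _ = 1 * g := by rw [hχfact]
      _ = g := one_mul g
  have hug : u * g = u := by rw [hudef, mul_assoc, mul_assoc, hgg]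
  have hgu : g * u = u := by
    rw [hudef, lcomm ((Cs _).symm.eq : g * s = s * g), lcomm (hgχ : g * χ = χ * g), hgg]
  have hσu : σ u = -u := by
    rw [hudef, hmul, hmul, Cσ, Cσ, hs]
    rw [← hgdef, ← hχdef]
    calc (g * χ) * (-s) = -((g*χ)*s) := by rw [mul_neg]
      _ = -(s*(g*χ)) := by rw [((Cs _).mul_right (Cs _)).symm.eq]
      _ = -(s*(χ*g)) := by rw [hgχ]
  -- the half idempotent e
  set h2 : A := algebraMap K A ((2:K)⁻¹) with hh2def
  have hh2 : h2 + h2 = 1 := by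
    rw [hh2def, ← map_add,
      show ((2:K)⁻¹ + (2:K)⁻¹ : K) = 1 by rw [← two_mul, mul_inv_cancel₀ hchar], map_one]
  have hc2 : ∀ x : A, h2 * x = x * h2 := fun x => Algebra.commutes _ _
  set e : A := h2 * (g + u) with hedef
  set eb : A := h2 * (g - u) with hebdef
  have hguadd : (g + u) * (g + u) = (g + u) + (g + u) := by
    have expand : (g+u)*(g+u) = g*g + g*u + (u*g + u*u) := by noncomm_ring
    rw [expand, hgg, hgu, hug, hu2]
    abel
  have hee : e * e = e := by
    calc e * e = h2 * ((g+u) * (h2 * (g+u))) := by rw [hedef, mul_assoc]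
      _ = h2 * (h2 * ((g+u) * (g+u))) := by rw [lcomm (hc2 (g+u)).symm]
      _ = h2 * (h2 * ((g+u) + (g+u))) := by rw [hguadd]
      _ = (h2 + h2) * (h2 * (g+u)) := by noncomm_ring
      _ = h2 * (g + u) := by rw [hh2, one_mul]
  have hσe : σ e = eb := by
    rw [hedef, hh2def, sig_algmul' σ, map_add, Cσ, hσu, ← sub_eq_add_neg, ← hh2def, ← hgdef,
      ← hebdef]
  have hσeb : σ eb = e := by
    rw [hebdef, hh2def, sig_algmul' σ, map_sub, Cσ, hσu, sub_neg_eq_add, ← hh2def, ← hgdef,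
      ← hedef]
  have hebeb : eb * eb = eb := by
    have h' := congrArg σ hee
    rw [hmul, hσe] at h'
    exact h'
  have heeb0 : e * eb = 0 := by
    have expand : (g+u)*(g-u) = g*g - g*u + (u*g - u*u) := by noncomm_ring
    calc e * eb = h2 * ((g+u) * (h2 * (g-u))) := by rw [hedef, hebdef, mul_assoc]
      _ = h2 * (h2 * ((g+u) * (g-u))) := by rw [lcomm (hc2 (g+u)).symm]
      _ = h2 * (h2 * (g*g - g*u + (u*g - u*u))) := by rw [expand]
      _ = h2 * (h2 * (g - u + (u - g))) := by rw [hgg, hgu, hug, hu2]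
      _ = h2 * (h2 * 0) := by rw [show g - u + (u - g) = (0:A) by abel]
      _ = 0 := by rw [mul_zero, mul_zero]
  have hebe0 : eb * e = 0 := by
    have expand : (g-u)*(g+u) = g*g + g*u - (u*g + u*u) := by noncomm_ring
    calc eb * e = h2 * ((g-u) * (h2 * (g+u))) := by rw [hedef, hebdef, mul_assoc]
      _ = h2 * (h2 * ((g-u) * (g+u))) := by rw [lcomm (hc2 (g-u)).symm]
      _ = h2 * (h2 * (g*g + g*u - (u*g + u*u))) := by rw [expand]
      _ = h2 * (h2 * (g + u - (u + g))) := by rw [hgg, hgu, hug, hu2]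
      _ = h2 * (h2 * 0) := by rw [show g + u - (u + g) = (0:A) by abel]
      _ = 0 := by rw [mul_zero, mul_zero]
  have heeb : e + eb = g := by
    calc e + eb = h2 * ((g+u) + (g-u)) := by rw [hedef, hebdef, ← mul_add]
      _ = h2 * (g + g) := by rw [show (g+u) + (g-u) = g + g by abel]
      _ = (h2 + h2) * g := by noncomm_ring
      _ = g := by rw [hh2, one_mul]
  have heg : e * g = e := by
    calc e * g = h2 * ((g+u) * g) := by rw [hedef, mul_assoc]
      _ = h2 * (g*g + u*g) := by rw [add_mul]
      _ = h2 * (g + u) := by rw [hgg, hug]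
  have hge : g * e = e := by
    calc g * e = h2 * (g * (g+u)) := by rw [hedef, lcomm (hc2 g).symm]
      _ = h2 * (g*g + g*u) := by rw [mul_add]
      _ = h2 * (g + u) := by rw [hgg, hgu]
  have hebg : eb * g = eb := by
    calc eb * g = h2 * ((g-u) * g) := by rw [hebdef, mul_assoc]
      _ = h2 * (g*g - u*g) := by rw [sub_mul]
      _ = h2 * (g - u) := by rw [hgg, hug]
  have hgeb : g * eb = eb := by
    calc g * eb = h2 * (g * (g-u)) := by rw [hebdef, lcomm (hc2 g).symm]
      _ = h2 * (g*g - g*u) := by rw [mul_sub]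
      _ = h2 * (g - u) := by rw [hgg, hgu]
  -- w
  set w : A := e - βA * eb with hwdef
  have hcβ : ∀ x : A, βA * x = x * βA := fun x => Algebra.commutes _ _
  have hσw : σ w = eb - βA * e := by
    rw [hwdef, map_sub, hσe, hβAdef, sig_algmul' σ, hσeb, ← hβAdef]
  have hσww : σ w * w = -(βA * g) := by
    have expand : (eb - βA*e) * (e - βA*eb)
        = eb*e - eb*(βA*eb) - ((βA*e)*e - (βA*e)*(βA*eb)) := by noncomm_ring
    rw [hσw, hwdef, expand]
    rw [lcomm (hcβ eb).symm, hebeb, mul_assoc βA e e, hee]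
    rw [mul_assoc βA e (βA*eb), lcomm (hcβ e).symm, heeb0, mul_zero, mul_zero, hebe0]
    calc (0:A) - βA*eb - (βA*e - 0) = -(βA*eb + βA*e) := by abel
      _ = -(βA*(eb+e)) := by rw [mul_add]
      _ = -(βA*g) := by rw [show eb + e = e + eb by abel, heeb]
  have hwσw : w * σ w = -(βA * g) := by
    have expand : (e - βA*eb) * (eb - βA*e)
        = e*eb - e*(βA*e) - ((βA*eb)*eb - (βA*eb)*(βA*e)) := by noncomm_ring
    rw [hσw, hwdef, expand]
    rw [lcomm (hcβ e).symm, hee, mul_assoc βA eb eb, hebeb]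
    rw [mul_assoc βA eb (βA*e), lcomm (hcβ eb).symm, hebe0, mul_zero, mul_zero, heeb0]
    calc (0:A) - βA*e - (βA*eb - 0) = -(βA*eb + βA*e) := by abel
      _ = -(βA*(eb+e)) := by rw [mul_add]
      _ = -(βA*g) := by rw [show eb + e = e + eb by abel, heeb]
  have hwg : w * g = w := by
    rw [hwdef, sub_mul, heg, mul_assoc, hebg]
  have hgw : g * w = w := by
    rw [hwdef, mul_sub, hge, lcomm (hcβ g).symm, hgeb]
  have hσwg : σ w * g = σ w := by
    rw [hσw, sub_mul, hebg, mul_assoc, heg]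
  have hgσw : g * σ w = σ w := by
    rw [hσw, mul_sub, hgeb, lcomm (hcβ g).symm, hge]
  -- m₁
  set m₁ : A := t * ((s+1) * c₁) with hm₁def
  have hσs1 : σ (s + 1) = 1 - s := by
    rw [map_add, hs, hone, neg_add_eq_sub]
  have hσc₁ : σ c₁ = c₁ := Cσ _
  have hσm₁ : σ m₁ = -(c₁ * ((1-s) * t)) := by
    rw [hm₁def, hmul, hmul, hσs1, hσc₁, ht]
    calc (c₁ * (1-s)) * (-t) = -((c₁*(1-s))*t) := by rw [mul_neg]
      _ = -(c₁*((1-s)*t)) := by rw [mul_assoc]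
  have hclump1 : c₁ * ((t*t) * (βτ * c₁)) = βA * f := by
    have e1 : c₁ * ((t*t) * (βτ * c₁))
        = Ta ((X^m * Y^(m+1) * (X^(m+1)*Y^(m+1))) * (X * ((C β * X) * (X^m * Y^(m+1) * (X^(m+1)*Y^(m+1)))))) := by
      rw [hc₁def, hβτdef, htX]
      simp only [map_mul]
    have e2 : Ta ((X^m * Y^(m+1) * (X^(m+1)*Y^(m+1))) * (X * ((C β * X) * (X^m * Y^(m+1) * (X^(m+1)*Y^(m+1))))))
        = Ta (C β * (X^(m+1)*Y^(m+1))) :=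
      Tcong _ _ (C β * (-(Y^(m+1)*S)) * ((X^(m+1)*Y^(m+1))^2 + X^(m+1)*Y^(m+1) + 1))
        (by linear_combination (C β * (-(Y^(m+1))) * ((X^(m+1)*Y^(m+1))^2 + X^(m+1)*Y^(m+1) + 1)) * hrel2')
    rw [e1, e2, hβATa, hfdef]
    exact map_mul Ta _ _
  have hclump2 : t * (βτ * ((c₁*c₁) * t)) = βA * f := by
    have hCtc₁ : Commute t c₁ := Ct _
    have hCtβτ : t * βτ = βτ * t := (Ct _).eq
    have htcc : t * (c₁*c₁) = (c₁*c₁) * t := (hCtc₁.mul_right hCtc₁).eq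
    calc t * (βτ * ((c₁*c₁) * t)) = βτ * (t * ((c₁*c₁) * t)) := lcomm hCtβτ _
      _ = βτ * ((c₁*c₁) * (t*t)) := by rw [lcomm htcc]
      _ = βA * f := by
          have e1 : βτ * ((c₁*c₁) * (t*t))
              = Ta ((C β * X) * (((X^m * Y^(m+1) * (X^(m+1)*Y^(m+1))) * (X^m * Y^(m+1) * (X^(m+1)*Y^(m+1)))) * X)) := by
            rw [hc₁def, hβτdef, htX]
            simp only [map_mul]
          have e2 : Ta ((C β * X) * (((X^m * Y^(m+1) * (X^(m+1)*Y^(m+1))) * (X^m * Y^(m+1) * (X^(m+1)*Y^(m+1)))) * X))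
              = Ta (C β * (X^(m+1)*Y^(m+1))) :=
            Tcong _ _ (C β * (-(Y^(m+1)*S)) * ((X^(m+1)*Y^(m+1))^2 + X^(m+1)*Y^(m+1) + 1))
              (by linear_combination (C β * (-(Y^(m+1))) * ((X^(m+1)*Y^(m+1))^2 + X^(m+1)*Y^(m+1) + 1)) * hrel2')
          rw [e1, e2, hβATa, hfdef]
          exact map_mul Ta _ _
  have hσm₁m₁ : σ m₁ * m₁ = -(βA * f) := by
    have hassoc : (c₁*((1-s)*t)) * (t*((s+1)*c₁)) = c₁*((1-s)*((t*t)*((s+1)*c₁))) := by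
      noncomm_ring
    have hcomm1s : (1-s) * (t*t) = (t*t) * (1-s) := ((Commute.one_left _).sub_left hsτ).eq
    calc σ m₁ * m₁ = -((c₁*((1-s)*t)) * (t*((s+1)*c₁))) := by rw [hσm₁, hm₁def, neg_mul]
      _ = -(c₁*((1-s)*((t*t)*((s+1)*c₁)))) := by rw [hassoc]
      _ = -(c₁*((t*t)*((1-s)*((s+1)*c₁)))) := by rw [lcomm hcomm1s]
      _ = -(c₁*((t*t)*(((1-s)*(s+1))*c₁))) := by rw [← mul_assoc (1-s) (s+1) c₁]
      _ = -(c₁*((t*t)*(βτ*c₁))) := by rw [h1s]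
      _ = -(βA * f) := by rw [hclump1]
  have hm₁σm₁ : m₁ * σ m₁ = -(βA * f) := by
    have hassoc : (t*((s+1)*c₁)) * (c₁*((1-s)*t)) = t*((s+1)*((c₁*c₁)*((1-s)*t))) := by
      noncomm_ring
    have hcomm1s : (c₁*c₁) * (1-s) = (1-s) * (c₁*c₁) :=
      (((Commute.one_left _).sub_left (Cs _)).mul_right
        ((Commute.one_left _).sub_left (Cs _))).symm.eq
    calc m₁ * σ m₁ = -((t*((s+1)*c₁)) * (c₁*((1-s)*t))) := by rw [hσm₁, hm₁def, mul_neg]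
      _ = -(t*((s+1)*((c₁*c₁)*((1-s)*t)))) := by rw [hassoc]
      _ = -(t*((s+1)*((1-s)*((c₁*c₁)*t)))) := by rw [lcomm hcomm1s]
      _ = -(t*(((s+1)*(1-s))*((c₁*c₁)*t))) := by rw [← mul_assoc (s+1) (1-s) ((c₁*c₁)*t)]
      _ = -(t*(βτ*((c₁*c₁)*t))) := by rw [h1s']
      _ = -(βA * f) := by rw [hclump2]
  -- m₁ absorbs f
  have hσf : σ f = f := Cσ _
  have hm₁f : m₁ * f = m₁ := by
    rw [hm₁def, mul_assoc, mul_assoc, hc₁f]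
  have hfm₁ : f * m₁ = m₁ := by
    have h1 : f * t = t * f := (Ct _).symm.eq
    have h2 : f * (s+1) = (s+1) * f := ((Cs _).add_left (Commute.one_left _)).symm.eq
    have h3 : f * c₁ = c₁ * f := (CT _ _).eq
    rw [hm₁def, lcomm h1, lcomm h2, h3, hc₁f]
  have hσm₁f : σ m₁ * f = σ m₁ := by
    have h' := congrArg σ hfm₁
    rw [hmul, hσf] at h'
    exact h'
  have hfσm₁ : f * σ m₁ = σ m₁ := by
    have h' := congrArg σ hm₁f
    rw [hmul, hσf] at h'
    exact h'
  -- cross terms vanish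
  have hcross1 : σ m₁ * w = 0 := by
    calc σ m₁ * w = (σ m₁ * f) * (g * w) := by rw [hσm₁f, hgw]
      _ = σ m₁ * (f * (g * w)) := by rw [mul_assoc]
      _ = σ m₁ * ((f * g) * w) := by rw [← mul_assoc f g w]
      _ = 0 := by rw [hfg0, zero_mul, mul_zero]
  have hcross2 : σ w * m₁ = 0 := by
    calc σ w * m₁ = (σ w * g) * (f * m₁) := by rw [hσwg, hfm₁]
      _ = σ w * (g * (f * m₁)) := by rw [mul_assoc]
      _ = σ w * ((g * f) * m₁) := by rw [← mul_assoc g f m₁]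
      _ = 0 := by rw [hgf0, zero_mul, mul_zero]
  have hcross3 : m₁ * σ w = 0 := by
    calc m₁ * σ w = (m₁ * f) * (g * σ w) := by rw [hm₁f, hgσw]
      _ = m₁ * (f * (g * σ w)) := by rw [mul_assoc]
      _ = m₁ * ((f * g) * σ w) := by rw [← mul_assoc f g (σ w)]
      _ = 0 := by rw [hfg0, zero_mul, mul_zero]
  have hcross4 : w * σ m₁ = 0 := by
    calc w * σ m₁ = (w * g) * (f * σ m₁) := by rw [hwg, hfσm₁]
      _ = w * (g * (f * σ m₁)) := by rw [mul_assoc]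
      _ = w * ((g * f) * σ m₁) := by rw [← mul_assoc g f (σ m₁)]
      _ = 0 := by rw [hgf0, zero_mul, mul_zero]
  -- conclusion
  refine ⟨m₁ + w, ?_, ?_⟩
  · have expand : (σ m₁ + σ w) * (m₁ + w)
        = σ m₁ * m₁ + σ m₁ * w + (σ w * m₁ + σ w * w) := by noncomm_ring
    rw [map_add, expand, hσm₁m₁, hcross1, hcross2, hσww]
    rw [show -(βA*f) + 0 + (0 + -(βA*g)) = -(βA*f + βA*g) by abel, ← mul_add, hfg1, mul_one]
    rw [hβAdef, ← map_neg]
  · have expand : (m₁ + w) * (σ m₁ + σ w)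
        = m₁ * σ m₁ + m₁ * σ w + (w * σ m₁ + w * σ w) := by noncomm_ring
    rw [map_add, expand, hm₁σm₁, hcross3, hcross4, hwσw]
    rw [show -(βA*f) + 0 + (0 + -(βA*g)) = -(βA*f + βA*g) by abel, ← mul_add, hfg1, mul_one]
    rw [hβAdef, ← map_neg]

end Statement12Aux

/-- **Lemma.** If neither `α` nor `-α` is a square in `K` and the involutions
`σ ⊗ id` on `A ⊗ K(√α)` and on `A ⊗ K(√-α)` are both hyperbolic, then `2 × σ` is
hyperbolic. -/
theorem statement12 {K A : Type*} [Field K] (hchar : (2 : K) ≠ 0)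
    [Ring A] [Algebra K A] [FiniteDimensional K A]
    (σ : A →ₗ[K] A)
    (hmul : ∀ x y : A, σ (x * y) = σ y * σ x)
    (hinvol : ∀ x : A, σ (σ x) = x)
    (α : K) (hα : ¬ IsSquare α) (hα' : ¬ IsSquare (-α))
    (h₁ : InvolutionHyperbolic
      (LinearMap.rTensor (AdjoinRoot (X ^ 2 - C α)) σ :
        A ⊗[K] AdjoinRoot (X ^ 2 - C α) → A ⊗[K] AdjoinRoot (X ^ 2 - C α)))
    (h₂ : InvolutionHyperbolic
      (LinearMap.rTensor (AdjoinRoot (X ^ 2 - C (-α))) σ :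
        A ⊗[K] AdjoinRoot (X ^ 2 - C (-α)) → A ⊗[K] AdjoinRoot (X ^ 2 - C (-α)))) :
    MatrixInvolutionHyperbolic (fun x => σ x) 2 := by
  have hone : σ 1 = 1 := Statement12Aux.sig_one σ hmul hinvol
  have hα0 : α ≠ 0 := by
    intro h
    exact hα ⟨0, by rw [h]; ring⟩
  obtain ⟨s, t, hs, ht, hst, hsq⟩ := Statement12Aux.extract σ hmul hone α h₁
  obtain ⟨p, q, hp, hq, hpq, hpsq⟩ := Statement12Aux.extract σ hmul hone (-α) h₂
  obtain ⟨n₁, hn₁a, hn₁b⟩ := Statement12Aux.lemmaA σ hmul hinvol hone hchar α s t hs ht hst hsq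
  obtain ⟨n₂, hn₂a', hn₂b'⟩ := Statement12Aux.lemmaA σ hmul hinvol hone hchar (-α) p q hp hq hpq hpsq
  rw [neg_neg] at hn₂a' hn₂b'
  set cA : A := algebraMap K A (α⁻¹) with hcA
  have hcAc : ∀ x : A, cA * x = x * cA := fun x => Algebra.commutes _ _
  have hmm : ∀ x y : A, (cA*x)*(cA*y) = cA*(cA*(x*y)) := by
    intro x y
    rw [mul_assoc, Statement12Aux.lcomm (hcAc x).symm]
  have hassoc4 : ∀ a b c d : A, (a*b)*(c*d) = a*((b*c)*d) := by
    intros a b c d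
    noncomm_ring
  set mm : A := cA * (σ n₁ * n₂) with hmmdef
  have hσmm : σ mm = cA * (σ n₂ * n₁) := by
    rw [hmmdef, hcA, Statement12Aux.sig_algmul' σ, hmul, hinvol]
  have hK1 : α⁻¹*(α⁻¹*(-α*α)) = -1 := by field_simp
  have hK2 : α⁻¹*(α⁻¹*(α*(-α))) = -1 := by field_simp
  have hval1 : σ mm * mm = -1 := by
    calc σ mm * mm = (cA*(σ n₂*n₁)) * (cA*(σ n₁*n₂)) := by rw [hσmm, hmmdef]
      _ = cA*(cA*((σ n₂*n₁)*(σ n₁*n₂))) := hmm _ _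
      _ = cA*(cA*(σ n₂*((n₁*σ n₁)*n₂))) := by rw [hassoc4]
      _ = cA*(cA*(σ n₂*(algebraMap K A (-α)*n₂))) := by rw [hn₁b]
      _ = cA*(cA*(algebraMap K A (-α)*(σ n₂*n₂))) := by
            rw [Statement12Aux.lcomm (Algebra.commutes (-α) (σ n₂)).symm]
      _ = cA*(cA*(algebraMap K A (-α)*(algebraMap K A α))) := by rw [hn₂a']
      _ = algebraMap K A (α⁻¹*(α⁻¹*(-α*α))) := by
            rw [hcA, ← map_mul, ← map_mul, ← map_mul]
      _ = -1 := by rw [hK1, map_neg, map_one]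
  have hval2 : mm * σ mm = -1 := by
    calc mm * σ mm = (cA*(σ n₁*n₂)) * (cA*(σ n₂*n₁)) := by rw [hσmm, hmmdef]
      _ = cA*(cA*((σ n₁*n₂)*(σ n₂*n₁))) := hmm _ _
      _ = cA*(cA*(σ n₁*((n₂*σ n₂)*n₁))) := by rw [hassoc4]
      _ = cA*(cA*(σ n₁*(algebraMap K A α*n₁))) := by rw [hn₂b']
      _ = cA*(cA*(algebraMap K A α*(σ n₁*n₁))) := by
            rw [Statement12Aux.lcomm (Algebra.commutes α (σ n₁)).symm]
      _ = cA*(cA*(algebraMap K A α*(algebraMap K A (-α)))) := by rw [hn₁a]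
      _ = algebraMap K A (α⁻¹*(α⁻¹*(α*(-α)))) := by
            rw [hcA, ← map_mul, ← map_mul, ← map_mul]
      _ = -1 := by rw [hK2, map_neg, map_one]
  -- the half scalar
  set hh : A := algebraMap K A ((2:K)⁻¹) with hhdef
  have hh2 : hh + hh = 1 := by
    rw [hhdef, ← map_add,
      show ((2:K)⁻¹ + (2:K)⁻¹ : K) = 1 by rw [← two_mul, mul_inv_cancel₀ hchar], map_one]
  have hhc : ∀ x : A, hh * x = x * hh := fun x => Algebra.commutes _ _
  have hhmm : ∀ x y : A, (hh*x)*(hh*y) = hh*(hh*(x*y)) := by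
    intro x y
    rw [mul_assoc, Statement12Aux.lcomm (hhc x).symm]
  have hσhh : σ hh = hh := by
    rw [hhdef, show algebraMap K A (2:K)⁻¹ = algebraMap K A (2:K)⁻¹ * 1 by rw [mul_one],
      Statement12Aux.sig_algmul' σ, hone]
  have haux1 : σ (hh * mm) = hh * σ mm := by rw [hhdef, Statement12Aux.sig_algmul' σ]
  have haux2 : σ (-(hh * σ mm)) = -(hh * mm) := by
    rw [map_neg, hhdef, Statement12Aux.sig_algmul' σ, hinvol]
  refine ⟨!![hh, hh * mm; -(hh * σ mm), hh], ?_, ?_⟩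
  · rw [Matrix.mul_fin_two]
    have e11 : hh*hh + (hh*mm)*(-(hh*σ mm)) = hh := by
      rw [mul_neg, hhmm, hval2, mul_neg_one, mul_neg, neg_neg, ← add_mul, hh2, one_mul]
    have e12 : hh*(hh*mm) + (hh*mm)*hh = hh*mm := by
      rw [← hhc (hh*mm), ← add_mul, hh2, one_mul]
    have e21 : (-(hh*σ mm))*hh + hh*(-(hh*σ mm)) = -(hh*σ mm) := by
      rw [neg_mul, ← hhc (hh*σ mm), mul_neg, ← neg_add, ← add_mul, hh2, one_mul]
    have e22 : (-(hh*σ mm))*(hh*mm) + hh*hh = hh := by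
      rw [neg_mul, hhmm, hval1, mul_neg_one, mul_neg, neg_neg, ← add_mul, hh2, one_mul]
    rw [e11, e12, e21, e22]
  · have hofs : (Matrix.of fun i j =>
        σ ((!![hh, hh * mm; -(hh * σ mm), hh] : Matrix (Fin 2) (Fin 2) A) j i))
          = !![hh, -(hh * mm); hh * σ mm, hh] := by
      ext i j
      fin_cases i <;> fin_cases j <;>
        simp [hσhh, haux1, haux2]
    show (Matrix.of fun i j => σ ((!![hh, hh * mm; -(hh * σ mm), hh] : Matrix (Fin 2) (Fin 2) A) j i))
        + !![hh, hh * mm; -(hh * σ mm), hh] = 1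
    rw [hofs]
    ext i j
    fin_cases i <;> fin_cases j <;>
      simp [Matrix.one_apply, hh2]
end

section
/- Let (V, q) be a finite-dimensional quadratic space over a field K of characteristic ≠ 2 (q possibly degenerate). Then the closure of the single-form system {q} equals its K-span: Cl{q} = K·q; that is, a quadratic form w on V satisfies w(ψx, y) = w(x, φy) for all x, y ∈ V and all (φ, ψ^op) in the algebra of adjoints of {q} if and only if w = α·q for some α ∈ K. -/
open Module

/-- **Proposition.** For a single (possibly degenerate) quadratic form `q`, the closure
`Cl{q}` equals the line `K·q`: a quadratic (symmetric bilinear) form `w` on `V` satisfies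
`w(ψx, y) = w(x, φy)` for all `x, y` and all pairs `(φ, ψᵒᵖ)` in the algebra of adjoints
of `{q}` iff `w = α·q` for some `α ∈ K`. -/
theorem statement15 {K V : Type*} [Field K] (hchar : (2 : K) ≠ 0)
    [AddCommGroup V] [Module K V] [FiniteDimensional K V]
    (B : LinearMap.BilinForm K V) (hB : B.IsSymm)
    (W : LinearMap.BilinForm K V) (hW : W.IsSymm) :
    ((∀ φ ψ : Module.End K V,
        (∀ x y : V, B (ψ x) y = B x (φ y)) →
        ∀ x y : V, W (ψ x) y = W x (φ y)) ↔
      ∃ α : K, W = α • B) := by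
  constructor
  · intro h
    by_cases hB0 : B = 0
    · refine ⟨0, ?_⟩
      have h0 := h 0 1 (by simp [hB0])
      ext x y
      have hx := h0 x y
      simpa using hx
    · have hex : ∃ b₀ y₀, B b₀ y₀ ≠ 0 := by
        by_contra hc
        push_neg at hc
        exact hB0 (by ext b y; simpa using hc b y)
      obtain ⟨b₀, y₀, hb⟩ := hex
      refine ⟨(B b₀ y₀)⁻¹ * W b₀ y₀, ?_⟩
      ext x a
      have key := h ((B b₀).smulRight a) ((B a).smulRight b₀)
        (fun u v => by
          simp only [LinearMap.smulRight_apply, map_smul, LinearMap.smul_apply,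
            smul_eq_mul]
          have h1 : B a u = B u a := by
            have := hB.eq a u; simpa using this
          rw [h1]; ring)
        x y₀
      simp only [LinearMap.smulRight_apply, map_smul, LinearMap.smul_apply,
        smul_eq_mul] at key
      have hBax : B a x = B x a := by
        have := hB.eq a x; simpa using this
      rw [hBax] at key
      simp only [LinearMap.smul_apply, smul_eq_mul]
      rw [mul_assoc, mul_comm ((W b₀) y₀), key, ← mul_assoc, inv_mul_cancel₀ hb,
        one_mul]
  · rintro ⟨α, rfl⟩ φ ψ hadj x y
    simp only [LinearMap.smul_apply, smul_eq_mul]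
    rw [hadj x y]
end

section
/- Let K be a field of characteristic ≠ 2, let α ∈ K and n ∈ ℕ. Let T_n ∈ M_n(K) be the matrix with 1's on the anti-diagonal and 0 elsewhere, and let S_n(α) ∈ M_n(K) be the symmetric matrix with α on the anti-diagonal, 1's on the sub-anti-diagonal (positions (i, j) with i + j = n + 2), and 0 elsewhere. If φ ∈ GL_n(K) satisfies φᵗ T_n = T_n φ and φᵗ S_n(α) = S_n(α) φ, then φ commutes with the Jordan block J_n(α) = T_n⁻¹ S_n(α), and consequently there exist β_1 ∈ K^× and β_2, …, β_n ∈ K such that φ is the upper-triangular Toeplitz matrix with β_1 on the main diagonal, β_2 on the first superdiagonal, …, β_n in the top-right corner. -/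
open Matrix

/-- The reversal (anti-diagonal) matrix `Tₙ` (`1` at positions `i + j = n - 1`,
zero-indexed). -/
def revMatrix (K : Type*) [Field K] (n : ℕ) : Matrix (Fin n) (Fin n) K :=
  Matrix.of fun i j => if (i : ℕ) + (j : ℕ) = n - 1 then 1 else 0

/-- The symmetric matrix `Sₙ(α)`: `α` on the anti-diagonal (`i + j = n - 1`,
zero-indexed), `1` on the sub-anti-diagonal (`i + j = n`), and `0` elsewhere. -/
def antiJordan {K : Type*} [Field K] (n : ℕ) (α : K) : Matrix (Fin n) (Fin n) K :=
  Matrix.of fun i j =>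
    if (i : ℕ) + (j : ℕ) = n - 1 then α else if (i : ℕ) + (j : ℕ) = n then 1 else 0

/-- The upper-triangular Jordan block `Jₙ(α)`. -/
def jordanBlock {K : Type*} [Field K] (n : ℕ) (α : K) : Matrix (Fin n) (Fin n) K :=
  Matrix.of fun i j => if i = j then α else if (j : ℕ) = (i : ℕ) + 1 then 1 else 0


section Aux
variable {K : Type*} [Field K] {n : ℕ}

lemma revMul (A : Matrix (Fin n) (Fin n) K) :
    revMatrix K n * A = Matrix.of fun i j => A i.rev j := by
  ext i j
  simp only [revMatrix, mul_apply, Matrix.of_apply]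
  rw [Finset.sum_eq_single i.rev]
  · rw [if_pos, one_mul]
    have := i.isLt
    simp [Fin.val_rev]; omega
  · intro k _ hk
    rw [if_neg, zero_mul]
    intro h
    apply hk
    have := i.isLt; have := k.isLt
    apply Fin.ext
    simp [Fin.val_rev]; omega
  · simp

lemma revRev : revMatrix K n * revMatrix K n = (1 : Matrix (Fin n) (Fin n) K) := by
  rw [revMul]
  ext i j
  have := i.isLt; have := j.isLt
  simp only [revMatrix, Matrix.of_apply, Fin.val_rev, one_apply, Fin.ext_iff]
  split_ifs <;> first | rfl | omega

lemma antiEq (α : K) : antiJordan n α = revMatrix K n * jordanBlock n α := by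
  rw [revMul]
  ext i j
  have := i.isLt; have := j.isLt
  simp only [antiJordan, jordanBlock, Matrix.of_apply, Fin.ext_iff, Fin.val_rev]
  split_ifs <;> first | rfl | omega

lemma mulN (φ : Matrix (Fin n) (Fin n) K) (i j : Fin n) :
    (φ * jordanBlock n (0 : K)) i j =
      if h : 0 < (j : ℕ) then φ i ⟨(j : ℕ) - 1, by omega⟩ else 0 := by
  simp only [mul_apply, jordanBlock, Matrix.of_apply]
  have key : ∀ k : Fin n, φ i k * (if k = j then (0:K) else if (j:ℕ) = (k:ℕ) + 1 then 1 else 0)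
      = if (j:ℕ) = (k:ℕ) + 1 then φ i k else 0 := by
    intro k
    rcases eq_or_ne k j with rfl | hne
    · simp
    · rw [if_neg hne]; split_ifs <;> simp
  rw [Finset.sum_congr rfl fun k _ => key k]
  split
  · next h =>
    rw [Finset.sum_eq_single (⟨(j : ℕ) - 1, by omega⟩ : Fin n)]
    · rw [if_pos (by simp; omega)]
    · intro k _ hk
      rw [if_neg]
      intro hkj
      exact hk (Fin.ext (by simp; omega))
    · simp
  · next h =>
    exact Finset.sum_eq_zero fun k _ => if_neg (by omega)

lemma Nmul (φ : Matrix (Fin n) (Fin n) K) (i j : Fin n) :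
    (jordanBlock n (0 : K) * φ) i j =
      if h : (i : ℕ) + 1 < n then φ ⟨(i : ℕ) + 1, h⟩ j else 0 := by
  simp only [mul_apply, jordanBlock, Matrix.of_apply]
  have key : ∀ k : Fin n, (if i = k then (0:K) else if (k:ℕ) = (i:ℕ) + 1 then 1 else 0) * φ k j
      = if (k:ℕ) = (i:ℕ) + 1 then φ k j else 0 := by
    intro k
    rcases eq_or_ne i k with rfl | hne
    · simp
    · rw [if_neg hne]; split_ifs <;> simp
  rw [Finset.sum_congr rfl fun k _ => key k]
  split
  · next h =>
    rw [Finset.sum_eq_single (⟨(i : ℕ) + 1, h⟩ : Fin n)]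
    · rw [if_pos (by simp)]
    · intro k _ hk
      rw [if_neg]
      intro hkj
      exact hk (Fin.ext (by simp; omega))
    · simp
  · next h =>
    exact Finset.sum_eq_zero fun k _ => if_neg (by have := k.isLt; omega)

/-- The candidate Toeplitz coefficient function. -/
noncomputable def cFun {K : Type*} [Field K] {n : ℕ} (φ : Matrix (Fin n) (Fin n) K) : ℕ → K :=
  fun d => if h : d < n then φ ⟨0, Nat.lt_of_le_of_lt (Nat.zero_le d) h⟩ ⟨d, h⟩ else 1

end Aux

/-- **Lemma.** If `φ ∈ GLₙ(K)` satisfies `φᵀ Tₙ = Tₙ φ` and `φᵀ Sₙ(α) = Sₙ(α) φ`, then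
`φ` commutes with the Jordan block `Jₙ(α) = Tₙ⁻¹ Sₙ(α)`, and consequently `φ` is an
upper-triangular Toeplitz matrix with invertible constant diagonal. -/
theorem statement17 {K : Type*} [Field K] (hchar : (2 : K) ≠ 0) (n : ℕ) (α : K)
    (φ : Matrix (Fin n) (Fin n) K) (hφ : IsUnit φ)
    (hT : φᵀ * revMatrix K n = revMatrix K n * φ)
    (hS : φᵀ * antiJordan n α = antiJordan n α * φ) :
    φ * jordanBlock n α = jordanBlock n α * φ ∧
    ∃ c : ℕ → K, c 0 ≠ 0 ∧
      ∀ i j : Fin n, φ i j = if (i : ℕ) ≤ (j : ℕ) then c ((j : ℕ) - (i : ℕ)) else 0 := by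
  -- Step 1: φ commutes with the Jordan block
  have hcomm : φ * jordanBlock n α = jordanBlock n α * φ := by
    have h1 : revMatrix K n * (φ * jordanBlock n α) = revMatrix K n * (jordanBlock n α * φ) := by
      rw [← mul_assoc, ← hT, mul_assoc, ← antiEq, hS, antiEq, mul_assoc]
    calc φ * jordanBlock n α
        = (revMatrix K n * revMatrix K n) * (φ * jordanBlock n α) := by rw [revRev, one_mul]
      _ = (revMatrix K n * revMatrix K n) * (jordanBlock n α * φ) := by
          rw [mul_assoc, h1, ← mul_assoc]
      _ = jordanBlock n α * φ := by rw [revRev, one_mul]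
  refine ⟨hcomm, ?_⟩
  -- Step 2: φ commutes with the shift matrix N = jordanBlock n 0
  have hsplit : jordanBlock n α = α • (1 : Matrix (Fin n) (Fin n) K) + jordanBlock n (0 : K) := by
    ext i j
    simp only [jordanBlock, Matrix.of_apply, Matrix.add_apply, Matrix.smul_apply, one_apply]
    split_ifs <;> simp
  have hN : φ * jordanBlock n (0 : K) = jordanBlock n (0 : K) * φ := by
    have h2 := hcomm
    rw [hsplit, mul_add, add_mul, mul_smul_comm, smul_mul_assoc, mul_one, one_mul] at h2
    exact add_left_cancel h2
  -- Entrywise relation, over ℕ indices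
  have R : ∀ (i j : ℕ) (hi : i < n) (hj : j < n),
      (if h : 0 < j then φ ⟨i, hi⟩ ⟨j - 1, by omega⟩ else 0) =
      (if h : i + 1 < n then φ ⟨i + 1, h⟩ ⟨j, hj⟩ else 0) := by
    intro i j hi hj
    have := congrFun (congrFun hN ⟨i, hi⟩) ⟨j, hj⟩
    rw [mulN, Nmul] at this
    exact this
  -- Step lemma and shift lemma
  have step : ∀ (i j : ℕ) (hi : i + 1 < n) (hj : j + 1 < n),
      φ ⟨i + 1, hi⟩ ⟨j + 1, hj⟩ = φ ⟨i, by omega⟩ ⟨j, by omega⟩ := by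
    intro i j hi hj
    have h3 := R i (j + 1) (by omega) hj
    rw [dif_pos (by omega), dif_pos hi] at h3
    simpa using h3.symm
  have shift : ∀ (d i j : ℕ) (hi : i + d < n) (hj : j + d < n),
      φ ⟨i + d, hi⟩ ⟨j + d, hj⟩ = φ ⟨i, by omega⟩ ⟨j, by omega⟩ := by
    intro d
    induction d with
    | zero => intro i j hi hj; rfl
    | succ d ih =>
      intro i j hi hj
      have e1 : (⟨i + (d + 1), hi⟩ : Fin n) = ⟨(i + d) + 1, by omega⟩ :=
        Fin.ext (show i + (d + 1) = (i + d) + 1 by omega)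
      have e2 : (⟨j + (d + 1), hj⟩ : Fin n) = ⟨(j + d) + 1, by omega⟩ :=
        Fin.ext (show j + (d + 1) = (j + d) + 1 by omega)
      rw [e1, e2, step (i + d) (j + d) (by omega) (by omega), ih i j (by omega) (by omega)]
  -- Last row is zero (except the last entry)
  have lastrow : ∀ (j : ℕ) (hj : j + 1 < n), φ ⟨n - 1, by omega⟩ ⟨j, by omega⟩ = 0 := by
    intro j hj
    have h4 := R (n - 1) (j + 1) (by omega) hj
    rw [dif_pos (by omega), dif_neg (by omega)] at h4
    simpa using h4
  -- Zero below diagonal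
  have hzero : ∀ i j : Fin n, (j : ℕ) < (i : ℕ) → φ i j = 0 := by
    intro i j hij
    have hi := i.isLt; have hj := j.isLt
    have h5 := shift (n - 1 - (i : ℕ)) (i : ℕ) (j : ℕ) (by omega) (by omega)
    have e0 : φ ⟨(i : ℕ), by omega⟩ ⟨(j : ℕ), by omega⟩ = φ i j := rfl
    rw [e0] at h5
    rw [← h5]
    have e1 : (⟨(i : ℕ) + (n - 1 - (i : ℕ)), by omega⟩ : Fin n) = ⟨n - 1, by omega⟩ :=
      Fin.ext (show (i : ℕ) + (n - 1 - (i : ℕ)) = n - 1 by omega)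
    rw [e1]
    have e2 : (⟨(j : ℕ) + (n - 1 - (i : ℕ)), by omega⟩ : Fin n) =
        ⟨(j : ℕ) + (n - 1 - (i : ℕ)), by omega⟩ := rfl
    exact lastrow ((j : ℕ) + (n - 1 - (i : ℕ))) (by omega)
  -- Toeplitz on/above diagonal
  have htoep : ∀ i j : Fin n, (i : ℕ) ≤ (j : ℕ) →
      φ i j = φ ⟨0, Nat.lt_of_le_of_lt (Nat.zero_le _) j.isLt⟩
        ⟨(j : ℕ) - (i : ℕ), by have := j.isLt; omega⟩ := by
    intro i j hij
    have hi := i.isLt; have hj := j.isLt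
    have h6 := shift (i : ℕ) 0 ((j : ℕ) - (i : ℕ)) (by omega) (by omega)
    have e1 : (⟨0 + (i : ℕ), by omega⟩ : Fin n) = i := Fin.ext (show 0 + (i : ℕ) = i by omega)
    have e2 : (⟨(j : ℕ) - (i : ℕ) + (i : ℕ), by omega⟩ : Fin n) = j :=
      Fin.ext (show (j : ℕ) - (i : ℕ) + (i : ℕ) = j by omega)
    rw [e1, e2] at h6
    exact h6
  refine ⟨cFun φ, ?_, ?_⟩
  · -- c 0 ≠ 0
    rw [cFun]
    by_cases hn : 0 < n
    · rw [dif_pos hn]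
      have hbt : φ.BlockTriangular id := fun i j h => hzero i j h
      have hdet : φ.det = ∏ i : Fin n, φ i i := Matrix.det_of_upperTriangular hbt
      have hdiag : ∀ i : Fin n, φ i i = φ ⟨0, hn⟩ ⟨0, hn⟩ := by
        intro i
        simpa using htoep i i le_rfl
      have hne : φ.det ≠ 0 := by
        intro h0
        have := hφ.map (Matrix.detMonoidHom)
        simp [Matrix.detMonoidHom, h0] at this
      intro hc
      apply hne
      rw [hdet, Finset.prod_eq_zero (i := ⟨0, hn⟩) (Finset.mem_univ _)]
      rw [hdiag ⟨0, hn⟩]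
      exact hc
    · rw [dif_neg (by omega)]; exact one_ne_zero
  · intro i j
    rw [cFun]
    by_cases hij : (i : ℕ) ≤ (j : ℕ)
    · rw [if_pos hij, dif_pos (show (j : ℕ) - (i : ℕ) < n by have := j.isLt; omega)]
      exact htoep i j hij
    · rw [if_neg hij]
      exact hzero i j (by omega)
end

section
/- Let K be a field of characteristic ≠ 2, let q_1, q_2 ∈ M_n(K) be symmetric matrices regarded as quadratic forms on K^n, with q_1 invertible, and set J = q_1⁻¹ q_2. Then: (i) for every pair (φ, ψ^op) in the algebra of adjoints of {q_1, q_2} (i.e., ψᵗ q_i = q_i φ for i = 1, 2), both φ and ψ commute with J; (ii) for every polynomial f ∈ K[X], the matrix q_1 · f(J) is symmetric and the corresponding quadratic form lies in Cl{q_1, q_2}; and (iii) if the pair {q_1, q_2} is hyperbolic, then the quadratic form q_1 · f(J) is hyperbolic for every f ∈ K[X]. -/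
open Matrix Polynomial

/-- A family of symmetric matrices, regarded as quadratic forms on `Kⁿ`, is hyperbolic if
`Kⁿ` is the direct sum of two subspaces on which all the forms vanish. -/
def IsHyperbolicMatSystem {K : Type*} [Field K] {n : ℕ} {ι : Sort*}
    (q : ι → Matrix (Fin n) (Fin n) K) : Prop :=
  ∃ U W : Submodule K (Fin n → K), IsCompl U W ∧
    (∀ i, ∀ v ∈ U, v ⬝ᵥ (q i).mulVec v = 0) ∧
    (∀ i, ∀ v ∈ W, v ⬝ᵥ (q i).mulVec v = 0)

/-- **Lemma.** Let `q₁, q₂` be symmetric matrices with `q₁` invertible and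
`J = q₁⁻¹ q₂`. Then (i) every pair `(φ, ψᵒᵖ)` in the algebra of adjoints of `{q₁, q₂}`
commutes with `J`; (ii) for every `f ∈ K[X]`, the matrix `q₁ f(J)` is symmetric and lies
in `Cl{q₁, q₂}`; (iii) if `{q₁, q₂}` is hyperbolic then so is `q₁ f(J)`. -/
theorem statement18 {K : Type*} [Field K] (hchar : (2 : K) ≠ 0) {n : ℕ}
    (q₁ q₂ : Matrix (Fin n) (Fin n) K)
    (h₁ : q₁ᵀ = q₁) (h₂ : q₂ᵀ = q₂) (hunit : IsUnit q₁.det) :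
    -- (i)
    (∀ φ ψ : Matrix (Fin n) (Fin n) K,
      ψᵀ * q₁ = q₁ * φ → ψᵀ * q₂ = q₂ * φ →
      φ * (q₁⁻¹ * q₂) = (q₁⁻¹ * q₂) * φ ∧ ψ * (q₁⁻¹ * q₂) = (q₁⁻¹ * q₂) * ψ) ∧
    -- (ii)
    (∀ f : K[X],
      (q₁ * aeval (q₁⁻¹ * q₂) f)ᵀ = q₁ * aeval (q₁⁻¹ * q₂) f ∧
      ∀ φ ψ : Matrix (Fin n) (Fin n) K,
        ψᵀ * q₁ = q₁ * φ → ψᵀ * q₂ = q₂ * φ →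
        ψᵀ * (q₁ * aeval (q₁⁻¹ * q₂) f) = (q₁ * aeval (q₁⁻¹ * q₂) f) * φ) ∧
    -- (iii)
    (IsHyperbolicMatSystem ![q₁, q₂] →
      ∀ f : K[X],
        IsHyperbolicMatSystem fun _ : Unit => q₁ * aeval (q₁⁻¹ * q₂) f) := by
  set J := q₁⁻¹ * q₂ with hJ
  have hq1J : q₁ * J = q₂ := Matrix.mul_nonsing_inv_cancel_left q₁ q₂ hunit
  have hcancel : ∀ A B : Matrix (Fin n) (Fin n) K, q₁ * A = q₁ * B → A = B := by
    intro A B h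
    have := congrArg (fun M => q₁⁻¹ * M) h
    simpa [← Matrix.mul_assoc, Matrix.nonsing_inv_mul q₁ hunit] using this
  -- part (i)
  have part1 : ∀ φ ψ : Matrix (Fin n) (Fin n) K,
      ψᵀ * q₁ = q₁ * φ → ψᵀ * q₂ = q₂ * φ →
      φ * J = J * φ ∧ ψ * J = J * ψ := by
    intro φ ψ hA hB
    constructor
    · apply hcancel
      calc q₁ * (φ * J) = ψᵀ * q₁ * J := by rw [hA, Matrix.mul_assoc]
        _ = ψᵀ * q₂ := by rw [Matrix.mul_assoc, hq1J]
        _ = q₂ * φ := hB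
        _ = q₁ * (J * φ) := by rw [← hq1J, Matrix.mul_assoc]
    · have hA' : q₁ * ψ = φᵀ * q₁ := by
        have := congrArg Matrix.transpose hA
        simpa [Matrix.transpose_mul, h₁] using this
      have hB' : q₂ * ψ = φᵀ * q₂ := by
        have := congrArg Matrix.transpose hB
        simpa [Matrix.transpose_mul, h₂] using this
      apply hcancel
      calc q₁ * (ψ * J) = φᵀ * q₁ * J := by rw [← Matrix.mul_assoc, hA']
        _ = φᵀ * q₂ := by rw [Matrix.mul_assoc, hq1J]
        _ = q₂ * ψ := hB'.symm
        _ = q₁ * (J * ψ) := by rw [← hq1J, Matrix.mul_assoc]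
  -- transpose intertwining: (aeval J f)ᵀ * q₁ = q₁ * aeval J f
  have hJt : Jᵀ * q₁ = q₁ * J := by
    rw [hJ, Matrix.transpose_mul, h₂, Matrix.transpose_nonsing_inv, h₁,
      Matrix.mul_assoc, Matrix.nonsing_inv_mul q₁ hunit, Matrix.mul_one, hq1J]
  have hpowt : ∀ k : ℕ, ((J ^ k)ᵀ) * q₁ = q₁ * J ^ k := by
    intro k
    induction k with
    | zero => simp
    | succ k ih =>
      rw [pow_succ, Matrix.transpose_mul, Matrix.mul_assoc, ih, ← Matrix.mul_assoc, hJt,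
        Matrix.mul_assoc, ← pow_succ', pow_succ]
  have key : ∀ f : K[X], (aeval J f)ᵀ * q₁ = q₁ * aeval J f := by
    intro f
    induction f using Polynomial.induction_on' with
    | add p q hp hq => simp [map_add, Matrix.transpose_add, Matrix.add_mul, Matrix.mul_add, hp, hq]
    | monomial k a =>
      rw [aeval_monomial, ← Algebra.smul_def]
      simp only [Matrix.transpose_smul, Matrix.smul_mul, Matrix.mul_smul, hpowt k]
  -- commuting with aeval
  have commf : ∀ (φ : Matrix (Fin n) (Fin n) K), φ * J = J * φ →
      ∀ f : K[X], φ * aeval J f = aeval J f * φ := by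
    intro φ hφ f
    induction f using Polynomial.induction_on' with
    | add p q hp hq => simp [map_add, Matrix.add_mul, Matrix.mul_add, hp, hq]
    | monomial k a =>
      rw [aeval_monomial, ← Algebra.smul_def]
      have : φ * J ^ k = J ^ k * φ := (Commute.pow_right hφ k)
      simp only [Matrix.mul_smul, Matrix.smul_mul, this]
  refine ⟨part1, fun f => ⟨?_, ?_⟩, ?_⟩
  · rw [Matrix.transpose_mul, h₁, key]
  · intro φ ψ hA hB
    have hc := (part1 φ ψ hA hB).1
    calc ψᵀ * (q₁ * aeval J f) = (ψᵀ * q₁) * aeval J f := by rw [Matrix.mul_assoc]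
      _ = q₁ * (φ * aeval J f) := by rw [hA, Matrix.mul_assoc]
      _ = q₁ * (aeval J f * φ) := by rw [commf φ hc f]
      _ = (q₁ * aeval J f) * φ := by rw [Matrix.mul_assoc]
  -- part (iii)
  · rintro ⟨U, W, hcompl, hU, hW⟩ f
    -- polarization
    have polar : ∀ (q : Matrix (Fin n) (Fin n) K), qᵀ = q →
        ∀ (S : Submodule K (Fin n → K)), (∀ v ∈ S, v ⬝ᵥ q *ᵥ v = 0) →
        ∀ u ∈ S, ∀ v ∈ S, u ⬝ᵥ q *ᵥ v = 0 := by
      intro q hq S hS u hu v hv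
      have hsymm : v ⬝ᵥ q *ᵥ u = u ⬝ᵥ q *ᵥ v := by
        rw [Matrix.dotProduct_mulVec, ← Matrix.mulVec_transpose, hq, dotProduct_comm]
      have h0 := hS (u + v) (S.add_mem hu hv)
      rw [Matrix.mulVec_add, dotProduct_add, add_dotProduct,
        add_dotProduct, hS u hu, hS v hv, hsymm] at h0
      have h2 : (2 : K) * (u ⬝ᵥ q *ᵥ v) = 0 := by ring_nf; linear_combination h0
      exact (mul_eq_zero.mp h2).resolve_left hchar
    have bil1U := polar q₁ h₁ U (hU 0)
    have bil2U := polar q₂ h₂ U (hU 1)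
    have bil1W := polar q₁ h₁ W (hW 0)
    have bil2W := polar q₂ h₂ W (hW 1)
    -- bilinear form setup
    set B := Matrix.toBilin' q₁ with hB
    have hBapp : ∀ u v, B u v = u ⬝ᵥ q₁ *ᵥ v := fun u v => Matrix.toBilin'_apply' _ _ _
    have hBnd : B.Nondegenerate := by
      apply Matrix.Nondegenerate.toBilin'
      exact Matrix.nondegenerate_of_det_ne_zero (by
        intro h0; rw [h0] at hunit; simp at hunit)
    have hBrefl : B.IsRefl := by
      intro x y hxy
      rw [hBapp] at *
      rw [Matrix.dotProduct_mulVec, ← Matrix.mulVec_transpose, h₁, dotProduct_comm]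
      exact hxy
    have hdim : ∀ S : Submodule K (Fin n → K),
        (∀ u ∈ S, ∀ v ∈ S, u ⬝ᵥ q₁ *ᵥ v = 0) →
        (S ≤ B.orthogonal S ∧
          Module.finrank K S ≤ n - Module.finrank K S) := by
      intro S hS
      have hle : S ≤ B.orthogonal S := by
        intro x hx u hu
        rw [hBapp]  -- may need adjusting
        exact hS u hu x hx
      refine ⟨hle, ?_⟩
      have := Submodule.finrank_mono hle
      rwa [LinearMap.BilinForm.finrank_orthogonal hBnd S,
        Module.finrank_pi K, Fintype.card_fin] at this
    obtain ⟨hleU, hU2⟩ := hdim U bil1U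
    obtain ⟨hleW, hW2⟩ := hdim W bil1W
    have hsum : Module.finrank K U + Module.finrank K W = n := by
      rw [Submodule.finrank_add_eq_of_isCompl hcompl]; simp
    have hUn : Module.finrank K U ≤ n := le_trans (Nat.le_of_lt_succ (Nat.lt_succ_of_le hU2)) (Nat.sub_le _ _)
    have hUeq : 2 * Module.finrank K U = n := by omega
    have hWeq : 2 * Module.finrank K W = n := by omega
    -- U is its own orthogonal
    have horthEq : ∀ S : Submodule K (Fin n → K), S ≤ B.orthogonal S →
        2 * Module.finrank K S = n → B.orthogonal S = S := by
      intro S hle hfr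
      refine (Submodule.eq_of_le_of_finrank_le hle ?_).symm
      rw [LinearMap.BilinForm.finrank_orthogonal hBnd S, Module.finrank_pi K,
        Fintype.card_fin]
      omega
    have hOU := horthEq U hleU hUeq
    have hOW := horthEq W hleW hWeq
    -- J preserves S
    have hJpres : ∀ (S : Submodule K (Fin n → K)), B.orthogonal S = S →
        (∀ u ∈ S, ∀ v ∈ S, u ⬝ᵥ q₂ *ᵥ v = 0) →
        ∀ v ∈ S, J *ᵥ v ∈ S := by
      intro S hOS h2S v hv
      rw [← hOS]
      intro u hu
      rw [hBapp, Matrix.mulVec_mulVec, hq1J]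
      exact h2S u hu v hv
    have hJU := hJpres U hOU bil2U
    have hJW := hJpres W hOW bil2W
    -- aeval preserves
    have haevalPres : ∀ (S : Submodule K (Fin n → K)), (∀ v ∈ S, J *ᵥ v ∈ S) →
        ∀ (g : K[X]), ∀ v ∈ S, (aeval J g) *ᵥ v ∈ S := by
      intro S hJS g
      induction g using Polynomial.induction_on' with
      | add p q hp hq =>
        intro v hv
        rw [map_add, Matrix.add_mulVec]
        exact S.add_mem (hp v hv) (hq v hv)
      | monomial k a =>
        intro v hv
        rw [aeval_monomial, ← Algebra.smul_def, Matrix.smul_mulVec]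
        refine S.smul_mem a ?_
        induction k with
        | zero => simpa using hv
        | succ k ih =>
          rw [pow_succ', ← Matrix.mulVec_mulVec]
          exact hJS _ ih
    refine ⟨U, W, hcompl, ?_, ?_⟩
    · intro _ v hv
      rw [← Matrix.mulVec_mulVec]
      exact bil1U v hv _ (haevalPres U hJU f v hv)
    · intro _ v hv
      rw [← Matrix.mulVec_mulVec]
      exact bil1W v hv _ (haevalPres W hJW f v hv)
end
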